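/- arXiv:2011.00511 — 3 statements merged into one kernel-verified Lean document; each statement's English description precedes it below -/
import Mathlib

section
/- The binary-refinable tree (T,σ) of a binary-explainable BMG (G,σ) satisfies r(T) = cl(R^bin(G,σ)), i.e., the set of triples displayed by the BRT is exactly the closure of the extended triple set. -/
/-- A rooted phylogenetic tree with leaf set `V`, encoded by its hierarchy of clusters
(the cluster of a vertex is the set of leaves below it; inner vertices of a phylogenetic
tree have at least two children, so vertices correspond bijectively to clusters). -/
structure PhyloTree (V : Type*) where
  clusters : Set (Set V)
  nonempty_of_mem : ∀ A ∈ clusters, A.Nonempty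
  univ_mem : Set.univ ∈ clusters
  singleton_mem : ∀ v : V, {v} ∈ clusters
  nested : ∀ A ∈ clusters, ∀ B ∈ clusters, A ⊆ B ∨ B ⊆ A ∨ Disjoint A B

namespace PhyloTree

variable {V : Type*}

/-- The cluster of the last common ancestor of `x` and `y`: the smallest cluster
containing both (the clusters containing `x` and `y` form a chain, so their
intersection is the smallest one). -/
def lca (T : PhyloTree V) (x y : V) : Set V :=
  ⋂₀ {A | A ∈ T.clusters ∧ x ∈ A ∧ y ∈ A}

/-- The rooted triple `xy|z` (on three pairwise distinct leaves) is displayed by `T`: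
`lca(x,y) ≺ lca(x,z) = lca(y,z)`. -/
def Displays (T : PhyloTree V) (x y z : V) : Prop :=
  x ≠ y ∧ x ≠ z ∧ y ≠ z ∧ T.lca x y ⊂ T.lca x z ∧ T.lca x z = T.lca y z

/-- `T` displays every triple of `R`; a triple `(x, y, z)` encodes `xy|z`. -/
def DisplaysSet (T : PhyloTree V) (R : Set (V × V × V)) : Prop :=
  ∀ t ∈ R, T.Displays t.1 t.2.1 t.2.2

/-- `r(T)`, the set of triples displayed by `T`. -/
def triples (T : PhyloTree V) : Set (V × V × V) :=
  {t | T.Displays t.1 t.2.1 t.2.2}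

/-- `T` is binary: every inner vertex (cluster with at least two leaves) has exactly
two children, i.e. splits into two disjoint proper subclusters. -/
def IsBinary (T : PhyloTree V) : Prop :=
  ∀ A ∈ T.clusters, 1 < A.ncard →
    ∃ B ∈ T.clusters, ∃ D ∈ T.clusters,
      Disjoint B D ∧ B ∪ D = A ∧ B ⊂ A ∧ D ⊂ A

/-- `T'` is a refinement of `T`: they have the same leaf set and `T` is obtained from
`T'` by contracting inner edges, i.e. every cluster of `T` is a cluster of `T'`. -/
def Refines (T' T : PhyloTree V) : Prop :=
  T.clusters ⊆ T'.clusters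

end PhyloTree

section BMG

variable {V C : Type*}

/-- `y` is a best match of `x` in the leaf-colored tree `(T,σ)`. -/
def bestMatch (T : PhyloTree V) (σ : V → C) (x y : V) : Prop :=
  σ x ≠ σ y ∧ ∀ y' : V, σ y' = σ y → T.lca x y ⊆ T.lca x y'

/-- The leaf-colored tree `(T,σ)` explains the vertex-colored digraph `(E,σ)`,
i.e. `(E,σ)` is the best match graph of `(T,σ)`. -/
def Explains (T : PhyloTree V) (σ : V → C) (E : V → V → Prop) : Prop :=
  ∀ x y, E x y ↔ bestMatch T σ x y

/-- `(E,σ)` is a best match graph. -/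
def IsBMG (E : V → V → Prop) (σ : V → C) : Prop :=
  ∃ T : PhyloTree V, Explains T σ E

/-- `(E,σ)` is binary-explainable. -/
def BinaryExplainable (E : V → V → Prop) (σ : V → C) : Prop :=
  ∃ T : PhyloTree V, T.IsBinary ∧ Explains T σ E

/-- The informative triples `R(G,σ)`: `(a,b,b')` encodes `ab|b'`. -/
def informativeTriples (E : V → V → Prop) (σ : V → C) : Set (V × V × V) :=
  {t | σ t.1 ≠ σ t.2.1 ∧ σ t.2.1 = σ t.2.2 ∧ E t.1 t.2.1 ∧ ¬ E t.1 t.2.2}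

/-- The forbidden triples `F(G,σ)`: `(a,b,b')` encodes `ab|b'`. -/
def forbiddenTriples (E : V → V → Prop) (σ : V → C) : Set (V × V × V) :=
  {t | σ t.1 ≠ σ t.2.1 ∧ σ t.2.1 = σ t.2.2 ∧ t.2.1 ≠ t.2.2 ∧ E t.1 t.2.1 ∧ E t.1 t.2.2}

/-- The extended triple set `R^bin(G,σ) = R(G,σ) ∪ {bb'|a : ab|b' ∈ F(G,σ)}`. -/
def Rbin (E : V → V → Prop) (σ : V → C) : Set (V × V × V) :=
  informativeTriples E σ ∪ {t | (t.2.2, t.1, t.2.1) ∈ forbiddenTriples E σ}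

/-- Properly colored: arcs only between vertices of distinct colors. -/
def ProperlyColored (E : V → V → Prop) (σ : V → C) : Prop :=
  ∀ x y, E x y → σ x ≠ σ y

/-- sf-colored: properly colored and every vertex has, for each color (of the graph)
different from its own, at least one out-neighbor of that color. -/
def SfColored (E : V → V → Prop) (σ : V → C) : Prop :=
  ProperlyColored E σ ∧ ∀ x y : V, σ y ≠ σ x → ∃ z, E x z ∧ σ z = σ y

/-- A triple set is consistent if some tree displays all of its triples. -/
def Consistent (R : Set (V × V × V)) : Prop :=
  ∃ T : PhyloTree V, T.DisplaysSet R

/-- The closure `cl(R)`: all triples displayed by every tree displaying `R`. -/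
def tripleClosure (R : Set (V × V × V)) : Set (V × V × V) :=
  {t | ∀ T : PhyloTree V, T.DisplaysSet R → T.Displays t.1 t.2.1 t.2.2}

/-- `(T,σ)` is a least resolved tree for `(E,σ)`: it explains `(E,σ)` and no tree
obtained from it by contracting an edge (i.e. by removing a non-root inner cluster)
explains `(E,σ)`. -/
def IsLRT (T : PhyloTree V) (σ : V → C) (E : V → V → Prop) : Prop :=
  Explains T σ E ∧
    ∀ A ∈ T.clusters, A ≠ Set.univ → 1 < A.ncard →
      ∀ T' : PhyloTree V, T'.clusters = T.clusters \ {A} → ¬ Explains T' σ E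

end BMG

section Aho

variable {V : Type*}

/-- Adjacency in the Aho graph `[R,L]`: `x` and `y` are joined whenever `xy|z ∈ R`
for some `z ∈ L` (only triples with all leaves in `L` are taken into account). -/
def ahoAdj (R : Set (V × V × V)) (L : Set V) (x y : V) : Prop :=
  x ∈ L ∧ y ∈ L ∧ ∃ z ∈ L, (x, y, z) ∈ R ∨ (y, x, z) ∈ R

/-- The vertex set of the connected component of `x` in the Aho graph `[R,L]`. -/
def ahoComponent (R : Set (V × V × V)) (L : Set V) (x : V) : Set V :=
  {y | Relation.ReflTransGen (ahoAdj R L) x y}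

/-- The clusters of the Aho tree `Aho(R, V)`: the full leaf set, and recursively the
connected components of the Aho graphs. -/
inductive IsAhoCluster (R : Set (V × V × V)) : Set V → Prop
  | univ : IsAhoCluster R Set.univ
  | component {L : Set V} {x : V} :
      IsAhoCluster R L → x ∈ L → IsAhoCluster R (ahoComponent R L x)

/-- `T` is the Aho tree (`BUILD` tree) of the triple set `R` on the full leaf set. -/
def IsAhoTree (R : Set (V × V × V)) (T : PhyloTree V) : Prop :=
  T.clusters = {A | IsAhoCluster R A}

/-- The union of the leaf sets of the triples in `R`. -/
def tripleLeaves (R : Set (V × V × V)) : Set V :=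
  {v | ∃ t ∈ R, v = t.1 ∨ v = t.2.1 ∨ v = t.2.2}

end Aho


/-! ### Auxiliary development -/

section Toolbox

set_option linter.unusedSectionVars false

variable {V : Type*} [Fintype V]

lemma chain_sInter_mem {F : Set (Set V)} (hne : F.Nonempty)
    (hchain : ∀ A ∈ F, ∀ B ∈ F, A ⊆ B ∨ B ⊆ A) : ⋂₀ F ∈ F := by
  obtain ⟨M, hM, hmin⟩ := Set.Finite.exists_minimalFor id F (Set.toFinite F) hne
  have hMall : ∀ A ∈ F, M ⊆ A := by
    intro A hA
    rcases hchain M hM A hA with h | h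
    · exact h
    · exact hmin hA h
  have heq : ⋂₀ F = M :=
    Set.Subset.antisymm (Set.sInter_subset_of_mem hM) (Set.subset_sInter hMall)
  rw [heq]; exact hM

namespace PhyloTree

variable (T : PhyloTree V)

lemma comparable {A B : Set V} (hA : A ∈ T.clusters) (hB : B ∈ T.clusters)
    {v : V} (hvA : v ∈ A) (hvB : v ∈ B) : A ⊆ B ∨ B ⊆ A := by
  rcases T.nested A hA B hB with h | h | h
  · exact Or.inl h
  · exact Or.inr h
  · exact absurd (h.ne_of_mem hvA hvB) (by simp)

lemma lca_spec (x y : V) :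
    T.lca x y ∈ T.clusters ∧ x ∈ T.lca x y ∧ y ∈ T.lca x y := by
  have h : ⋂₀ {A | A ∈ T.clusters ∧ x ∈ A ∧ y ∈ A} ∈
      {A | A ∈ T.clusters ∧ x ∈ A ∧ y ∈ A} := by
    apply chain_sInter_mem
    · exact ⟨Set.univ, T.univ_mem, Set.mem_univ x, Set.mem_univ y⟩
    · rintro A ⟨hA, hxA, -⟩ B ⟨hB, hxB, -⟩
      exact T.comparable hA hB hxA hxB
  exact h

lemma lca_cluster (x y : V) : T.lca x y ∈ T.clusters := (T.lca_spec x y).1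

lemma lca_left_mem (x y : V) : x ∈ T.lca x y := (T.lca_spec x y).2.1

lemma lca_right_mem (x y : V) : y ∈ T.lca x y := (T.lca_spec x y).2.2

lemma lca_subset {A : Set V} (hA : A ∈ T.clusters) {x y : V}
    (hx : x ∈ A) (hy : y ∈ A) : T.lca x y ⊆ A :=
  Set.sInter_subset_of_mem ⟨hA, hx, hy⟩

lemma lca_comm (x y : V) : T.lca x y = T.lca y x :=
  Set.Subset.antisymm
    (T.lca_subset (T.lca_cluster y x) (T.lca_right_mem y x) (T.lca_left_mem y x))
    (T.lca_subset (T.lca_cluster x y) (T.lca_right_mem x y) (T.lca_left_mem x y))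

lemma displays_iff {x y z : V} :
    T.Displays x y z ↔ x ≠ y ∧ z ∉ T.lca x y := by
  constructor
  · rintro ⟨hxy, -, -, hss, -⟩
    refine ⟨hxy, fun hz => ?_⟩
    exact hss.not_subset (T.lca_subset (T.lca_cluster x y) (T.lca_left_mem x y) hz)
  · rintro ⟨hxy, hz⟩
    have hxz : x ≠ z := fun h => hz (h ▸ T.lca_left_mem x y)
    have hyz : y ≠ z := fun h => hz (h ▸ T.lca_right_mem x y)
    have hnot : ¬ T.lca x z ⊆ T.lca x y := fun h => hz (h (T.lca_right_mem x z))
    have hsub : T.lca x y ⊆ T.lca x z := by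
      rcases T.comparable (T.lca_cluster x y) (T.lca_cluster x z)
        (T.lca_left_mem x y) (T.lca_left_mem x z) with h | h
      · exact h
      · exact absurd h hnot
    have hss : T.lca x y ⊂ T.lca x z := ssubset_iff_subset_not_subset.mpr ⟨hsub, hnot⟩
    have hyin : y ∈ T.lca x z := hsub (T.lca_right_mem x y)
    have h1 : T.lca y z ⊆ T.lca x z :=
      T.lca_subset (T.lca_cluster x z) hyin (T.lca_right_mem x z)
    have hxin : x ∈ T.lca y z := by
      rcases T.comparable (T.lca_cluster y z) (T.lca_cluster x y)
        (T.lca_left_mem y z) (T.lca_right_mem x y) with h | h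
      · exact absurd (h (T.lca_right_mem y z)) hz
      · exact h (T.lca_left_mem x y)
    have h2 : T.lca x z ⊆ T.lca y z :=
      T.lca_subset (T.lca_cluster y z) hxin (T.lca_right_mem y z)
    exact ⟨hxy, hxz, hyz, hss, Set.Subset.antisymm h2 h1⟩

lemma displays_of_not_mem {x y z : V} (hxy : x ≠ y) (hz : z ∉ T.lca x y) :
    T.Displays x y z := T.displays_iff.mpr ⟨hxy, hz⟩

end PhyloTree

end Toolbox


section BMGFacts

set_option linter.unusedSectionVars false

variable {V Γ : Type*} [Fintype V] {E : V → V → Prop} {σ : V → Γ} {Tb : PhyloTree V}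

lemma exists_bestMatch {c : Γ} {x : V} (hc : ∃ v, σ v = c) (hcx : c ≠ σ x) :
    ∃ u, σ u = c ∧ bestMatch Tb σ x u := by
  classical
  obtain ⟨v0, hv0⟩ := hc
  set F : Set (Set V) := {A | ∃ v, σ v = c ∧ A = Tb.lca x v} with hF
  have hne : F.Nonempty := ⟨Tb.lca x v0, v0, hv0, rfl⟩
  have hchain : ∀ A ∈ F, ∀ B ∈ F, A ⊆ B ∨ B ⊆ A := by
    rintro A ⟨v, hv, rfl⟩ B ⟨w, hw, rfl⟩
    exact Tb.comparable (Tb.lca_cluster x v) (Tb.lca_cluster x w)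
      (Tb.lca_left_mem x v) (Tb.lca_left_mem x w)
  obtain ⟨u, hu, heq⟩ := chain_sInter_mem hne hchain
  refine ⟨u, hu, Ne.symm (hu ▸ hcx), ?_⟩
  intro y' hy'
  have h1 : ⋂₀ F ⊆ Tb.lca x y' := Set.sInter_subset_of_mem ⟨y', hu ▸ hy', rfl⟩
  rw [heq] at h1
  exact h1

lemma bm_lca_eq {x u v : V} (h1 : bestMatch Tb σ x u) (h2 : bestMatch Tb σ x v)
    (huv : σ u = σ v) : Tb.lca x u = Tb.lca x v :=
  Set.Subset.antisymm (h1.2 v huv.symm) (h2.2 u huv)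

lemma mem_Rbin_inf {a b b' : V} (h1 : σ a ≠ σ b) (h2 : σ b = σ b') (h3 : E a b)
    (h4 : ¬ E a b') : (a, b, b') ∈ Rbin E σ :=
  Or.inl ⟨h1, h2, h3, h4⟩

lemma mem_Rbin_forb {a b b' : V} (h1 : σ a ≠ σ b) (h2 : σ b = σ b') (h3 : b ≠ b')
    (h4 : E a b) (h5 : E a b') : (b, b', a) ∈ Rbin E σ :=
  Or.inr (show (a, b, b') ∈ forbiddenTriples E σ from ⟨h1, h2, h3, h4, h5⟩)

lemma Rbin_fst_ne : ∀ t ∈ Rbin E σ, t.1 ≠ t.2.1 := by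
  rintro ⟨x, y, z⟩ (hinf | hforb)
  · exact fun h => hinf.1 (congrArg σ h)
  · exact hforb.2.2.1

lemma disp_not_mem {T' : PhyloTree V} {R : Set (V × V × V)} (hdisp : T'.DisplaysSet R)
    {a b c : V} (ht : (a, b, c) ∈ R) : c ∉ T'.lca a b :=
  ((T'.displays_iff).mp (hdisp _ ht)).2

lemma binary_displays_Rbin (hbin : Tb.IsBinary) (hE : Explains Tb σ E) :
    Tb.DisplaysSet (Rbin E σ) := by
  rintro ⟨x, y, z⟩ (hinf | hforb)
  · obtain ⟨h1, h2, h3, h4⟩ := hinf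
    refine Tb.displays_of_not_mem (fun h => h1 (congrArg σ h)) (fun hz => ?_)
    have bm := (hE x y).mp h3
    apply h4
    refine (hE x z).mpr ⟨fun h => h1 (h.trans h2.symm) , fun y' hy' => ?_⟩
    have hsub : Tb.lca x z ⊆ Tb.lca x y :=
      Tb.lca_subset (Tb.lca_cluster x y) (Tb.lca_left_mem x y) hz
    exact hsub.trans (bm.2 y' (hy'.trans h2.symm))
  · obtain ⟨g1, g2, g3, g4, g5⟩ := hforb
    refine Tb.displays_of_not_mem g3 (fun hz => ?_)
    have bmx := (hE z x).mp g4
    have bmy := (hE z y).mp g5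
    have hM : Tb.lca z x = Tb.lca z y := bm_lca_eq bmx bmy g2
    have hzx : z ≠ x := fun h => g1 (congrArg σ h)
    have hcard : 1 < (Tb.lca z x).ncard := by
      rw [Set.one_lt_ncard (Set.toFinite _)]
      exact ⟨z, Tb.lca_left_mem z x, x, Tb.lca_right_mem z x, hzx⟩
    obtain ⟨B, hB, D, hD, hdisj, hunion, hBp, hDp⟩ :=
      hbin (Tb.lca z x) (Tb.lca_cluster z x) hcard
    have key : ∀ B' D' : Set V, B' ∈ Tb.clusters → D' ∈ Tb.clusters → Disjoint B' D' →
        B' ∪ D' = Tb.lca z x → B' ⊂ Tb.lca z x → D' ⊂ Tb.lca z x → z ∈ B' → False := by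
      intro B' D' hB' hD' hdisj' hunion' hBp' hDp' hzB
      have hxmem : x ∈ B' ∪ D' := hunion' ▸ Tb.lca_right_mem z x
      have hxD : x ∈ D' := by
        rcases hxmem with hxB | hxD
        · exact absurd (Tb.lca_subset hB' hzB hxB) hBp'.not_subset
        · exact hxD
      have hyD : y ∈ D' := by
        have hymem : y ∈ B' ∪ D' := by
          rw [hunion', hM]; exact Tb.lca_right_mem z y
        rcases hymem with hyB | hyD
        · exfalso
          have : Tb.lca z x ⊆ B' := hM ▸ Tb.lca_subset hB' hzB hyB
          exact hBp'.not_subset this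
        · exact hyD
      have hNsub : Tb.lca x y ⊆ D' := Tb.lca_subset hD' hxD hyD
      exact Set.disjoint_left.mp hdisj' hzB (hNsub hz)
    have hzmem : z ∈ B ∪ D := hunion ▸ Tb.lca_left_mem z x
    rcases hzmem with hzB | hzD
    · exact key B D hB hD hdisj hunion hBp hDp hzB
    · exact key D B hD hB hdisj.symm (Set.union_comm B D ▸ hunion) hDp hBp hzD

end BMGFacts

section AhoFacts

set_option linter.unusedSectionVars false

variable {V : Type*} [Fintype V] {R : Set (V × V × V)} {T : PhyloTree V}

lemma ahoAdj_symm {L : Set V} : Symmetric (ahoAdj R L) :=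
  fun _ _ ⟨hx, hy, z, hz, h⟩ => ⟨hy, hx, z, hz, h.symm⟩

lemma ahoComponent_subset {L : Set V} {x : V} (hx : x ∈ L) :
    ahoComponent R L x ⊆ L := by
  intro y hy
  induction hy with
  | refl => exact hx
  | tail _ h _ => exact h.2.1

lemma mem_ahoComponent_self {L : Set V} {x : V} : x ∈ ahoComponent R L x :=
  Relation.ReflTransGen.refl

lemma ahoComponent_eq_of_mem {L : Set V} {x y : V} (hy : y ∈ ahoComponent R L x) :
    ahoComponent R L y = ahoComponent R L x := by
  have hxy : Relation.ReflTransGen (ahoAdj R L) y x :=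
    by haveI : Std.Symm (ahoAdj R L) := ⟨fun _ _ h => ahoAdj_symm h⟩; exact Relation.ReflTransGen.symmetric.symm _ _ hy
  ext w
  exact ⟨fun hw => Relation.ReflTransGen.trans hy hw,
    fun hw => Relation.ReflTransGen.trans hxy hw⟩

lemma ahoAdj_mono {L L' : Set V} (h : L ⊆ L') {a b : V} (hab : ahoAdj R L a b) :
    ahoAdj R L' a b := by
  obtain ⟨ha, hb, z, hz, hor⟩ := hab
  exact ⟨h ha, h hb, z, h hz, hor⟩

lemma ahoComponent_mono {L L' : Set V} (h : L ⊆ L') (x : V) :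
    ahoComponent R L x ⊆ ahoComponent R L' x := by
  intro w hw
  exact Relation.ReflTransGen.mono (fun _ _ hab => ahoAdj_mono h hab) _ _ hw

lemma aho_mem_clusters (hT : IsAhoTree R T) {A : Set V} (hA : IsAhoCluster R A) :
    A ∈ T.clusters := by rw [hT]; exact hA

lemma aho_of_mem_clusters (hT : IsAhoTree R T) {A : Set V} (hA : A ∈ T.clusters) :
    IsAhoCluster R A := by rw [hT] at hA; exact hA

lemma noSub (hT : IsAhoTree R T) {N : Set V} {x : V} (hN : IsAhoCluster R N) (hx : x ∈ N)
    (hconn : ahoComponent R N x = N) : ∀ A, IsAhoCluster R A → ¬ (A ⊂ N) := by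
  intro A hA
  induction hA with
  | univ => exact fun h => h.not_subset (Set.subset_univ N)
  | @component L' x' hL' hx' ih =>
    intro hsub
    rcases T.nested L' (aho_mem_clusters hT hL') N (aho_mem_clusters hT hN) with h | h | h
    · have hLN : L' = N := by
        by_contra hne
        exact ih (ssubset_of_subset_of_ne h hne)
      subst hLN
      have hx'mem : x' ∈ ahoComponent R L' x := by rw [hconn]; exact hx'
      have heq : ahoComponent R L' x' = L' := by
        rw [ahoComponent_eq_of_mem hx'mem, hconn]
      rw [heq] at hsub
      exact hsub.ne rfl
    · have hx'N : x' ∈ N := hsub.subset mem_ahoComponent_self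
      have hx'mem : x' ∈ ahoComponent R N x := by rw [hconn]; exact hx'N
      have h1 : ahoComponent R N x' = N := by
        rw [ahoComponent_eq_of_mem hx'mem, hconn]
      have hmono : ahoComponent R N x' ⊆ ahoComponent R L' x' := ahoComponent_mono h x'
      rw [h1] at hmono
      exact hsub.not_subset hmono
    · have hx'N : x' ∈ N := hsub.subset mem_ahoComponent_self
      exact Set.disjoint_left.mp h hx' hx'N

lemma comp_ssubset (hT : IsAhoTree R T) {N : Set V} {u v : V} (hN : IsAhoCluster R N)
    (hu : u ∈ N) (hv : v ∈ N) (huv : u ≠ v) {x : V} (hx : x ∈ N) :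
    ahoComponent R N x ⊂ N := by
  refine ssubset_of_subset_of_ne (ahoComponent_subset hx) (fun hconn => ?_)
  have hsing : IsAhoCluster R {u} := aho_of_mem_clusters hT (T.singleton_mem u)
  refine noSub hT hN hx hconn {u} hsing ?_
  refine ssubset_of_subset_of_ne (Set.singleton_subset_iff.mpr hu) (fun h => ?_)
  exact huv (by rw [← h] at hv; exact (Set.mem_singleton_iff.mp hv).symm)

lemma aho_sep (hT : IsAhoTree R T) :
    ∀ n (N : Set V), N.ncard ≤ n → IsAhoCluster R N →
    ∀ x y z, (x, y, z) ∈ R → x ≠ y → x ∈ N → y ∈ N → z ∈ N → z ∉ T.lca x y := by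
  intro n
  induction n with
  | zero =>
    intro N hn hN x y z hR hxy hx hy hz
    have h0 : N.ncard = 0 := le_antisymm hn (Nat.zero_le _)
    rw [Set.ncard_eq_zero (Set.toFinite _)] at h0
    rw [h0] at hx
    cases hx
  | succ n ih =>
    intro N hn hN x y z hR hxy hx hy hz
    have hyK : y ∈ ahoComponent R N x :=
      Relation.ReflTransGen.single ⟨hx, hy, z, hz, Or.inl hR⟩
    have hKaho : IsAhoCluster R (ahoComponent R N x) := IsAhoCluster.component hN hx
    by_cases hzK : z ∈ ahoComponent R N x
    · have hKss : ahoComponent R N x ⊂ N := comp_ssubset hT hN hx hy hxy hx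
      have hcard : (ahoComponent R N x).ncard ≤ n := by
        have := Set.ncard_lt_ncard hKss (Set.toFinite N)
        omega
      exact ih _ hcard hKaho x y z hR hxy mem_ahoComponent_self hyK hzK
    · intro hmem
      exact hzK (T.lca_subset (aho_mem_clusters hT hKaho) mem_ahoComponent_self hyK hmem)

lemma aho_displays (hT : IsAhoTree R T) (hne : ∀ t ∈ R, t.1 ≠ t.2.1) :
    T.DisplaysSet R := by
  rintro ⟨x, y, z⟩ ht
  exact T.displays_of_not_mem (hne _ ht)
    (aho_sep hT (Set.univ : Set V).ncard Set.univ le_rfl IsAhoCluster.univ x y z ht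
      (hne _ ht) (Set.mem_univ x) (Set.mem_univ y) (Set.mem_univ z))

end AhoFacts


section Structural

set_option linter.unusedSectionVars false

variable {V Γ : Type*} [Fintype V] {E : V → V → Prop} {σ : V → Γ} {Tb : PhyloTree V}

lemma lca_cross (Tb : PhyloTree V) {A' A1 A2 : Set V}
    (hA' : A' ∈ Tb.clusters) (hA1 : A1 ∈ Tb.clusters) (hA2 : A2 ∈ Tb.clusters)
    (hdisj : Disjoint A1 A2) (hun : A1 ∪ A2 = A')
    {u v : V} (hu : u ∈ A1) (hv : v ∈ A2) : Tb.lca u v = A' := by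
  have huA' : u ∈ A' := hun ▸ Or.inl hu
  have hvA' : v ∈ A' := hun ▸ Or.inr hv
  refine Set.Subset.antisymm (Tb.lca_subset hA' huA' hvA') ?_
  rcases Tb.comparable (Tb.lca_cluster u v) hA1 (Tb.lca_left_mem u v) hu with h | h
  · exact absurd (h (Tb.lca_right_mem u v)) (fun hvA1 => Set.disjoint_left.mp hdisj hvA1 hv)
  · rcases Tb.comparable (Tb.lca_cluster u v) hA2 (Tb.lca_right_mem u v) hv with h2 | h2
    · exact absurd (h2 (Tb.lca_left_mem u v)) (fun huA2 => Set.disjoint_left.mp hdisj hu huA2)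
    · rw [← hun]; exact Set.union_subset h h2

lemma modeI (hE : Explains Tb σ E) {L A' A1 A2 : Set V}
    (hA' : A' ∈ Tb.clusters) (hA'L : A' ⊆ L)
    (hA1 : A1 ∈ Tb.clusters) (hA2 : A2 ∈ Tb.clusters) (hdisj : Disjoint A1 A2)
    (hun : A1 ∪ A2 = A') (h1p : A1 ⊂ A') (h2p : A2 ⊂ A')
    {y y' w : V} (hy : y ∈ A1) (hy' : y' ∈ A2) (hwL : w ∈ L)
    (hEyy' : E y y') (hnEyw : ¬ E y w) (hσw : σ y' = σ w) :
    ∀ v ∈ A', Relation.ReflTransGen (ahoAdj (Rbin E σ) L) y v := by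
  have bm := (hE y y').mp hEyy'
  have hmem1 : ∀ {u : V}, u ∈ A1 → u ∈ A' := fun hu => hun ▸ Or.inl hu
  have hmem2 : ∀ {u : V}, u ∈ A2 → u ∈ A' := fun hu => hun ▸ Or.inr hu
  have hcross : ∀ u ∈ A1, ∀ v ∈ A2, Tb.lca u v = A' :=
    fun u hu v hv => lca_cross Tb hA' hA1 hA2 hdisj hun hu hv
  have hnoc1 : ∀ v ∈ A1, σ v ≠ σ y' := by
    intro v hv hc
    have h1 : Tb.lca y y' ⊆ Tb.lca y v := bm.2 v hc
    have h2 : Tb.lca y v ⊆ A1 := Tb.lca_subset hA1 hy hv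
    rw [hcross y hy y' hy'] at h1
    exact h1p.not_subset (h1.trans h2)
  have hw_out : w ∉ A' := by
    intro hwA
    apply hnEyw
    refine (hE y w).mpr ⟨fun h => bm.1 (h.trans hσw.symm), fun y₂ hy₂ => ?_⟩
    have h1 : Tb.lca y w ⊆ A' := Tb.lca_subset hA' (hmem1 hy) hwA
    have h2 : Tb.lca y y' ⊆ Tb.lca y y₂ := bm.2 y₂ (hy₂.trans hσw.symm)
    rw [hcross y hy y' hy'] at h2
    exact h1.trans h2
  have hEuv : ∀ u ∈ A1, ∀ v ∈ A2, σ v = σ y' → E u v := by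
    intro u hu v hv hσv
    refine (hE u v).mpr ⟨fun h => hnoc1 u hu (h.trans hσv), fun y₂ hy₂ => ?_⟩
    rw [hcross u hu v hv]
    by_cases hy₂A : y₂ ∈ A'
    · have : y₂ ∈ A1 ∪ A2 := hun.symm ▸ hy₂A
      rcases this with h1 | h2
      · exact absurd (hy₂.trans hσv) (hnoc1 y₂ h1)
      · exact le_of_eq (hcross u hu y₂ h2).symm
    · rcases Tb.comparable (Tb.lca_cluster u y₂) hA' (Tb.lca_left_mem u y₂) (hmem1 hu) with h | h
      · exact absurd (h (Tb.lca_right_mem u y₂)) hy₂A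
      · exact h
  have hadj1 : ∀ u ∈ A1, ∀ v ∈ A2, σ v = σ y' → ahoAdj (Rbin E σ) L u v := by
    intro u hu v hv hσv
    have hnEuw : ¬ E u w := by
      intro hEuw
      have hs := ((hE u w).mp hEuw).2 v (hσv.trans hσw)
      rw [hcross u hu v hv] at hs
      exact hw_out (hs (Tb.lca_right_mem u w))
    exact ⟨hA'L (hmem1 hu), hA'L (hmem2 hv), w, hwL,
      Or.inl (mem_Rbin_inf (fun h => hnoc1 u hu (h.trans hσv)) (hσv.trans hσw)
        (hEuv u hu v hv hσv) hnEuw)⟩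
  have hadj2 : ∀ u' ∈ A2, σ u' ≠ σ y' →
      ∃ v', v' ∈ A2 ∧ σ v' = σ y' ∧ ahoAdj (Rbin E σ) L u' v' := by
    intro u' hu' hσu'
    obtain ⟨v', hv'c, bmv'⟩ := exists_bestMatch (Tb := Tb) (c := σ y') ⟨y', rfl⟩ (Ne.symm hσu')
    have hsub : Tb.lca u' v' ⊆ A2 :=
      (bmv'.2 y' hv'c.symm).trans (Tb.lca_subset hA2 hu' hy')
    have hv'A2 : v' ∈ A2 := hsub (Tb.lca_right_mem u' v')
    have hnEu'w : ¬ E u' w := by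
      intro hEuw
      have hs := ((hE u' w).mp hEuw).2 v' (hv'c.trans hσw)
      exact hw_out (hmem2 (hsub (hs (Tb.lca_right_mem u' w))))
    exact ⟨v', hv'A2, hv'c, ⟨hA'L (hmem2 hu'), hA'L (hmem2 hv'A2), w, hwL,
      Or.inl (mem_Rbin_inf (fun h => hσu' (h.trans hv'c)) (hv'c.trans hσw)
        ((hE u' v').mpr bmv') hnEu'w)⟩⟩
  intro v hv
  have hvBD : v ∈ A1 ∪ A2 := hun.symm ▸ hv
  have step1 : Relation.ReflTransGen (ahoAdj (Rbin E σ) L) y y' :=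
    Relation.ReflTransGen.single (hadj1 y hy y' hy' rfl)
  rcases hvBD with hv1 | hv2
  · exact step1.tail (ahoAdj_symm (hadj1 v hv1 y' hy' rfl))
  · by_cases hσv : σ v = σ y'
    · exact Relation.ReflTransGen.single (hadj1 y hy v hv2 hσv)
    · obtain ⟨v', hv'A2, hv'c, hadjv⟩ := hadj2 v hv2 hσv
      exact (Relation.ReflTransGen.single (hadj1 y hy v' hv'A2 hv'c)).tail (ahoAdj_symm hadjv)

lemma modeII (hE : Explains Tb σ E) {L A' A1 A2 : Set V}
    (hA' : A' ∈ Tb.clusters) (hA'L : A' ⊆ L)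
    (hA1 : A1 ∈ Tb.clusters) (hA2 : A2 ∈ Tb.clusters) (hdisj : Disjoint A1 A2)
    (hun : A1 ∪ A2 = A') (h1p : A1 ⊂ A') (h2p : A2 ⊂ A')
    {y y' w : V} (hy : y ∈ A1) (hy' : y' ∈ A2) (hwL : w ∈ L)
    (hσw : σ w ≠ σ y) (hσyy' : σ y = σ y') (hyy' : y ≠ y')
    (hEwy : E w y) (hEwy' : E w y') :
    ∀ v ∈ A', Relation.ReflTransGen (ahoAdj (Rbin E σ) L) y v := by
  have bmy := (hE w y).mp hEwy
  have bmy' := (hE w y').mp hEwy'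
  have hmem1 : ∀ {u : V}, u ∈ A1 → u ∈ A' := fun hu => hun ▸ Or.inl hu
  have hmem2 : ∀ {u : V}, u ∈ A2 → u ∈ A' := fun hu => hun ▸ Or.inr hu
  have hw_out : w ∉ A' := by
    intro hwA
    have hwBD : w ∈ A1 ∪ A2 := hun.symm ▸ hwA
    rcases hwBD with h1 | h2
    · have hc := lca_cross Tb hA' hA1 hA2 hdisj hun h1 hy'
      have hsub := bmy'.2 y hσyy'
      rw [hc] at hsub
      exact h1p.not_subset (hsub.trans (Tb.lca_subset hA1 h1 hy))
    · have hc := lca_cross Tb hA' hA1 hA2 hdisj hun hy h2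
      have hsub := bmy.2 y' hσyy'.symm
      rw [Tb.lca_comm y w] at hc
      rw [hc] at hsub
      exact h2p.not_subset (hsub.trans (Tb.lca_subset hA2 h2 hy'))
  have hMall : ∀ u ∈ A', Tb.lca w u = Tb.lca w y := by
    intro u hu
    have hA'M : A' ⊆ Tb.lca w y := by
      rcases Tb.comparable hA' (Tb.lca_cluster w y) (hmem1 hy) (Tb.lca_right_mem w y) with h | h
      · exact h
      · exact absurd (h (Tb.lca_left_mem w y)) hw_out
    refine Set.Subset.antisymm
      (Tb.lca_subset (Tb.lca_cluster w y) (Tb.lca_left_mem w y) (hA'M hu)) ?_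
    have hy_in : y ∈ Tb.lca w u := by
      rcases Tb.comparable hA' (Tb.lca_cluster w u) hu (Tb.lca_right_mem w u) with h | h
      · exact h (hmem1 hy)
      · exact absurd (h (Tb.lca_left_mem w u)) hw_out
    exact Tb.lca_subset (Tb.lca_cluster w u) (Tb.lca_left_mem w u) hy_in
  have hEwv : ∀ v ∈ A', σ v = σ y → E w v := by
    intro v hv hσv
    refine (hE w v).mpr ⟨fun h => hσw (h.trans hσv), fun y₂ hy₂ => ?_⟩
    rw [hMall v hv]
    exact bmy.2 y₂ (hy₂.trans hσv)
  have hclique : ∀ v ∈ A', ∀ v'' ∈ A', σ v = σ y → σ v'' = σ y → v ≠ v'' →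
      ahoAdj (Rbin E σ) L v v'' := by
    intro v hv v'' hv'' hσv hσv'' hne
    exact ⟨hA'L hv, hA'L hv'', w, hwL, Or.inl (mem_Rbin_forb
      (fun h => hσw (h.trans hσv)) (hσv.trans hσv''.symm) hne
      (hEwv v hv hσv) (hEwv v'' hv'' hσv''))⟩
  have attach : ∀ (X : Set V), X ∈ Tb.clusters → X ⊆ A' →
      ∀ yc ∈ X, σ yc = σ y →
      ∀ oth ∈ A', oth ∉ X → σ oth = σ y →
      ∀ u ∈ X, σ u ≠ σ y →
      ∃ v', v' ∈ X ∧ σ v' = σ y ∧ ahoAdj (Rbin E σ) L u v' := by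
    intro X hX hXA yc hyc hycσ oth hothA hothX hothσ u hu huσ
    obtain ⟨v', hv'c, bmv'⟩ := exists_bestMatch (Tb := Tb) (c := σ y) ⟨y, rfl⟩ (Ne.symm huσ)
    have hsub : Tb.lca u v' ⊆ X :=
      (bmv'.2 yc (hycσ.trans hv'c.symm)).trans (Tb.lca_subset hX hu hyc)
    have hv'X : v' ∈ X := hsub (Tb.lca_right_mem u v')
    have hnEuoth : ¬ E u oth := by
      intro hEuo
      have hs := ((hE u oth).mp hEuo).2 v' (hv'c.trans hothσ.symm)
      exact hothX (hsub (hs (Tb.lca_right_mem u oth)))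
    exact ⟨v', hv'X, hv'c, ⟨hA'L (hXA hu), hA'L (hXA hv'X), oth, hA'L hothA, Or.inl
      (mem_Rbin_inf (fun h => huσ (h.trans hv'c)) (hv'c.trans hothσ.symm)
        ((hE u v').mpr bmv') hnEuoth)⟩⟩
  have hyA' : y ∈ A' := hmem1 hy
  have hy'A' : y' ∈ A' := hmem2 hy'
  intro v hv
  have hvBD : v ∈ A1 ∪ A2 := hun.symm ▸ hv
  rcases hvBD with hv1 | hv2
  · by_cases hσv : σ v = σ y
    · by_cases hvy : v = y
      · exact hvy ▸ Relation.ReflTransGen.refl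
      · exact Relation.ReflTransGen.single (hclique y hyA' v hv rfl hσv (Ne.symm hvy))
    · obtain ⟨v', hv'X, hv'c, hadjv⟩ := attach A1 hA1 (by rw [← hun]; exact Set.subset_union_left)
        y hy rfl y' hy'A' (fun h => Set.disjoint_left.mp hdisj h hy') hσyy'.symm v hv1 hσv
      have hstep : Relation.ReflTransGen (ahoAdj (Rbin E σ) L) y v' := by
        by_cases hv'y : v' = y
        · exact hv'y ▸ Relation.ReflTransGen.refl
        · exact Relation.ReflTransGen.single
            (hclique y hyA' v' (hmem1 hv'X) rfl hv'c (Ne.symm hv'y))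
      exact hstep.tail (ahoAdj_symm hadjv)
  · by_cases hσv : σ v = σ y
    · have hvy : v ≠ y := fun h => Set.disjoint_left.mp hdisj (h ▸ hy) hv2
      exact Relation.ReflTransGen.single (hclique y hyA' v hv rfl hσv (Ne.symm hvy))
    · obtain ⟨v', hv'X, hv'c, hadjv⟩ := attach A2 hA2 (by rw [← hun]; exact Set.subset_union_right)
        y' hy' hσyy'.symm y hyA' (fun h => Set.disjoint_left.mp hdisj hy h) rfl v hv2 hσv
      have hv'ne : v' ≠ y := fun h => Set.disjoint_left.mp hdisj (h ▸ hy) hv'X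
      exact (Relation.ReflTransGen.single
        (hclique y hyA' v' (hmem2 hv'X) rfl hv'c (Ne.symm hv'ne))).tail (ahoAdj_symm hadjv)

lemma dichotomy (hE : Explains Tb σ E) {L A' A1 A2 : Set V}
    (hA' : A' ∈ Tb.clusters) (hA'L : A' ⊆ L)
    (hA1 : A1 ∈ Tb.clusters) (hA2 : A2 ∈ Tb.clusters) (hdisj : Disjoint A1 A2)
    (hun : A1 ∪ A2 = A') (h1p : A1 ⊂ A') (h2p : A2 ⊂ A')
    {y y' : V} (hy : y ∈ A1) (hy' : y' ∈ A2)
    (hadj : ahoAdj (Rbin E σ) L y y') :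
    ∀ v ∈ A', Relation.ReflTransGen (ahoAdj (Rbin E σ) L) y v := by
  obtain ⟨hyL, hy'L, w, hwL, hor⟩ := hadj
  have hun' : A2 ∪ A1 = A' := (Set.union_comm A2 A1).trans hun
  rcases hor with h | h
  · rcases h with hinf | hforb
    · exact modeI hE hA' hA'L hA1 hA2 hdisj hun h1p h2p hy hy' hwL
        hinf.2.2.1 hinf.2.2.2 hinf.2.1
    · exact modeII hE hA' hA'L hA1 hA2 hdisj hun h1p h2p hy hy' hwL
        hforb.1 hforb.2.1 hforb.2.2.1 hforb.2.2.2.1 hforb.2.2.2.2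
  · have hbase : ∀ v ∈ A', Relation.ReflTransGen (ahoAdj (Rbin E σ) L) y' v := by
      rcases h with hinf | hforb
      · exact modeI hE hA' hA'L hA2 hA1 hdisj.symm hun' h2p h1p hy' hy hwL
          hinf.2.2.1 hinf.2.2.2 hinf.2.1
      · exact modeII hE hA' hA'L hA2 hA1 hdisj.symm hun' h2p h1p hy' hy hwL
          hforb.1 hforb.2.1 hforb.2.2.1 hforb.2.2.2.1 hforb.2.2.2.2
    intro v hv
    have hyy' : ahoAdj (Rbin E σ) L y y' := ⟨hyL, hy'L, w, hwL, Or.inr h⟩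
    exact (Relation.ReflTransGen.single hyy').trans (hbase v hv)

lemma ml0_step (hbin : Tb.IsBinary) (hE : Explains Tb σ E)
    {L : Set V} (hLTb : L ∈ Tb.clusters) {x₀ : V} (hx₀ : x₀ ∈ L) :
    ahoComponent (Rbin E σ) L x₀ ∈ Tb.clusters := by
  classical
  set R := Rbin E σ with hRdef
  have hne : ({A | A ∈ Tb.clusters ∧ x₀ ∈ A ∧ A ⊆ ahoComponent R L x₀} : Set (Set V)).Nonempty :=
    ⟨{x₀}, Tb.singleton_mem x₀, rfl, Set.singleton_subset_iff.mpr mem_ahoComponent_self⟩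
  obtain ⟨A', hA'𝒜, hmax⟩ := Set.Finite.exists_maximalFor id
    {A | A ∈ Tb.clusters ∧ x₀ ∈ A ∧ A ⊆ ahoComponent R L x₀} (Set.toFinite _) hne
  obtain ⟨hA'cl, hx₀A', hA'K⟩ := hA'𝒜
  have aux : ∀ v, Relation.ReflTransGen (ahoAdj R L) x₀ v → v ∈ A' := by
    intro v hv
    induction hv with
    | refl => exact hx₀A'
    | @tail b c hxb hadjbc ihb =>
      by_cases hc : c ∈ A'
      · exact hc
      · exfalso
        have hcK : c ∈ ahoComponent R L x₀ := hxb.tail hadjbc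
        have hbc : b ≠ c := fun h => hc (h ▸ ihb)
        have hbL : b ∈ L := hadjbc.1
        have hcL : c ∈ L := hadjbc.2.1
        have hMcl := Tb.lca_cluster b c
        have hbM := Tb.lca_left_mem b c
        have hcM := Tb.lca_right_mem b c
        have hML : Tb.lca b c ⊆ L := Tb.lca_subset hLTb hbL hcL
        have hMcard : 1 < (Tb.lca b c).ncard := by
          rw [Set.one_lt_ncard (Set.toFinite _)]
          exact ⟨b, hbM, c, hcM, hbc⟩
        obtain ⟨B, hB, D, hD, hdisj, hunion, hBp, hDp⟩ := hbin (Tb.lca b c) hMcl hMcard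
        have hsplit : (b ∈ B ∧ c ∈ D) ∨ (b ∈ D ∧ c ∈ B) := by
          have hbBD : b ∈ B ∪ D := hunion.symm ▸ hbM
          have hcBD : c ∈ B ∪ D := hunion.symm ▸ hcM
          rcases hbBD with h1 | h1 <;> rcases hcBD with h2 | h2
          · exact absurd (Tb.lca_subset hB h1 h2) hBp.not_subset
          · exact Or.inl ⟨h1, h2⟩
          · exact Or.inr ⟨h1, h2⟩
          · exact absurd (Tb.lca_subset hD h1 h2) hDp.not_subset
        have hconn : ∀ u ∈ Tb.lca b c, u ∈ ahoComponent R L x₀ := by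
          rcases hsplit with ⟨hbB, hcD⟩ | ⟨hbD, hcB⟩
          · intro u hu
            exact Relation.ReflTransGen.trans hxb
              (dichotomy hE hMcl hML hB hD hdisj hunion hBp hDp hbB hcD hadjbc u hu)
          · intro u hu
            exact Relation.ReflTransGen.trans hxb
              (dichotomy hE hMcl hML hD hB hdisj.symm
                ((Set.union_comm D B).trans hunion) hDp hBp hbD hcB hadjbc u hu)
        have hA'M : A' ⊆ Tb.lca b c := by
          rcases Tb.comparable hA'cl hMcl ihb hbM with h | h
          · exact h
          · exact absurd (h hcM) hc
        have heq : A' = Tb.lca b c := le_antisymm hA'M (hmax ⟨hMcl, hA'M hx₀A', hconn⟩ hA'M)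
        exact hc (by rw [heq]; exact hcM)
  have : ahoComponent R L x₀ = A' :=
    Set.Subset.antisymm (fun v hv => aux v hv) hA'K
  rw [this]; exact hA'cl

end Structural


section Main

set_option linter.unusedSectionVars false
set_option maxHeartbeats 1000000

variable {V Γ : Type*} [Fintype V] {E : V → V → Prop} {σ : V → Γ} {Tb : PhyloTree V}

lemma anchored {T' : PhyloTree V} {W : Set V} (hW : W ∈ T'.clusters) {a b z : V}
    (ha : a ∈ W) (hb : b ∉ W) (hz : z ∈ W) (hnm : z ∉ T'.lca a b) : False := by
  rcases T'.comparable hW (T'.lca_cluster a b) ha (T'.lca_left_mem a b) with h | h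
  · exact hnm (h hz)
  · exact hb (h (T'.lca_right_mem a b))

lemma absorb {T' : PhyloTree V} {W : Set V} (hW : W ∈ T'.clusters) {z q v : V}
    (hz : z ∈ W) (hq : q ∈ W) (hnm : q ∉ T'.lca z v) : v ∈ W := by
  rcases T'.comparable hW (T'.lca_cluster z v) hz (T'.lca_left_mem z v) with h | h
  · exact absurd (h hq) hnm
  · exact h (T'.lca_right_mem z v)

lemma propA_step (hbin : Tb.IsBinary) (hE : Explains Tb σ E)
    {T' : PhyloTree V} (hdisp : T'.DisplaysSet (Rbin E σ))
    {L : Set V} (hLTb : L ∈ Tb.clusters) (hLT' : L ∈ T'.clusters)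
    {x₀ : V} (hx₀ : x₀ ∈ L)
    (hKTb : ahoComponent (Rbin E σ) L x₀ ∈ Tb.clusters) :
    ahoComponent (Rbin E σ) L x₀ ∈ T'.clusters := by
  classical
  set R := Rbin E σ with hRdef
  set K := ahoComponent R L x₀ with hKdef
  have hx₀K : x₀ ∈ K := mem_ahoComponent_self
  have hKL : K ⊆ L := ahoComponent_subset hx₀
  by_cases h2 : ∀ y ∈ K, y = x₀
  · have : K = {x₀} := Set.Subset.antisymm (fun y hy => h2 y hy)
      (Set.singleton_subset_iff.mpr hx₀K)
    rw [this]; exact T'.singleton_mem x₀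
  push_neg at h2
  obtain ⟨y₁, hy₁K, hy₁ne⟩ := h2
  have hWmem : ⋂₀ {A | A ∈ T'.clusters ∧ K ⊆ A} ∈ {A | A ∈ T'.clusters ∧ K ⊆ A} := by
    apply chain_sInter_mem
    · exact ⟨L, hLT', hKL⟩
    · rintro A ⟨hA, hKA⟩ A' ⟨hA', hKA'⟩
      exact T'.comparable hA hA' (hKA hx₀K) (hKA' hx₀K)
  set W := ⋂₀ {A | A ∈ T'.clusters ∧ K ⊆ A} with hWdef
  obtain ⟨hW, hKW⟩ := hWmem
  have hWmin : ∀ A, A ∈ T'.clusters → K ⊆ A → W ⊆ A :=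
    fun A hA hKA => Set.sInter_subset_of_mem ⟨hA, hKA⟩
  have hWL : W ⊆ L := hWmin L hLT' hKL
  by_cases hWK : W ⊆ K
  · have : K = W := Set.Subset.antisymm hKW hWK
    rw [this]; exact hW
  obtain ⟨z, hzW, hzK⟩ := Set.not_subset.mp hWK
  exfalso
  have hEne : ({X : Set V | ∃ a b, a ∈ K ∧ ahoAdj R L a b ∧ X = T'.lca a b}).Nonempty := by
    rcases Relation.ReflTransGen.cases_head hy₁K with h | ⟨c, hc, -⟩
    · exact absurd h.symm hy₁ne
    · exact ⟨T'.lca x₀ c, x₀, c, hx₀K, hc, rfl⟩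
  obtain ⟨X, hXE, hXmax⟩ := Set.Finite.exists_maximalFor id
    {X : Set V | ∃ a b, a ∈ K ∧ ahoAdj R L a b ∧ X = T'.lca a b} (Set.toFinite _) hEne
  obtain ⟨p, q, hpK, hpq, hXeq⟩ := hXE
  have hqK : q ∈ K := hpK.tail hpq
  have hXcl : X ∈ T'.clusters := by rw [hXeq]; exact T'.lca_cluster p q
  have hKX : K ⊆ X := by
    intro v hv
    have hv' : Relation.ReflTransGen (ahoAdj R L) p v := by
      have hm : v ∈ ahoComponent R L p := by
        rw [ahoComponent_eq_of_mem hpK]; exact hv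
      exact hm
    clear hv
    induction hv' with
    | refl => rw [hXeq]; exact T'.lca_left_mem p q
    | @tail b c hrtg hadjbc ihb =>
      have hbK : b ∈ K := by
        have hm : b ∈ ahoComponent R L p := hrtg
        rw [ahoComponent_eq_of_mem hpK] at hm; exact hm
      have hbcE : T'.lca b c ∈
          {X : Set V | ∃ a b', a ∈ K ∧ ahoAdj R L a b' ∧ X = T'.lca a b'} :=
        ⟨b, c, hbK, hadjbc, rfl⟩
      rcases T'.comparable (T'.lca_cluster b c) hXcl (T'.lca_left_mem b c) ihb with h | h
      · exact h (T'.lca_right_mem b c)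
      · have heq : X = T'.lca b c := le_antisymm h (hXmax hbcE h)
        rw [heq]; exact T'.lca_right_mem b c
  have hXW : T'.lca p q = W := by
    refine Set.Subset.antisymm (T'.lca_subset hW (hKW hpK) (hKW hqK)) ?_
    have h1 : W ⊆ X := hWmin X hXcl hKX
    rw [hXeq] at h1; exact h1
  have hzL : z ∈ L := hWL hzW
  have hPmem : ⋂₀ {A | A ∈ Tb.clusters ∧ K ⊆ A ∧ z ∈ A} ∈
      {A | A ∈ Tb.clusters ∧ K ⊆ A ∧ z ∈ A} := by
    apply chain_sInter_mem
    · exact ⟨L, hLTb, hKL, hzL⟩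
    · rintro A ⟨hA, hKA, -⟩ A' ⟨hA', hKA', -⟩
      exact Tb.comparable hA hA' (hKA hx₀K) (hKA' hx₀K)
  set P := ⋂₀ {A | A ∈ Tb.clusters ∧ K ⊆ A ∧ z ∈ A} with hPdef
  obtain ⟨hPTb, hKP, hzP⟩ := hPmem
  have hPmin : ∀ A, A ∈ Tb.clusters → K ⊆ A → z ∈ A → P ⊆ A :=
    fun A hA ha hb => Set.sInter_subset_of_mem ⟨hA, ha, hb⟩
  have hPL : P ⊆ L := hPmin L hLTb hKL hzL
  have hPcard : 1 < P.ncard := by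
    rw [Set.one_lt_ncard (Set.toFinite _)]
    exact ⟨x₀, hKP hx₀K, z, hzP, fun h => hzK (h ▸ hx₀K)⟩
  obtain ⟨B, hB, D, hD, hdisjBD, hunBD, hBp, hDp⟩ := hbin P hPTb hPcard
  have hadjK : ∀ a' : V, ahoAdj R L a' q → a' ∈ K := by
    intro a' ha'
    have hm : a' ∈ ahoComponent R L q := Relation.ReflTransGen.single (ahoAdj_symm ha')
    rw [ahoComponent_eq_of_mem hqK] at hm; exact hm
  have hadjKp : ∀ a' : V, ahoAdj R L a' p → a' ∈ K := by
    intro a' ha'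
    have hm : a' ∈ ahoComponent R L p := Relation.ReflTransGen.single (ahoAdj_symm ha')
    rw [ahoComponent_eq_of_mem hpK] at hm; exact hm
  have final : ∀ C₁ C₂ : Set V, C₁ ∈ Tb.clusters → C₂ ∈ Tb.clusters → Disjoint C₁ C₂ →
      C₁ ∪ C₂ = P → C₁ ⊂ P → C₂ ⊂ P → K ⊆ C₁ → False := by
    intro C₁ C₂ hC₁ hC₂ hdisj hunP hC₁p hC₂p hKC₁
    have hzC₂ : z ∈ C₂ := by
      have hm : z ∈ C₁ ∪ C₂ := hunP ▸ hzP
      rcases hm with h | h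
      · exact absurd (hPmin C₁ hC₁ hKC₁ h) hC₁p.not_subset
      · exact h
    have hzC₁ : z ∉ C₁ := fun h => Set.disjoint_left.mp hdisj h hzC₂
    have hlcaC₁ : ∀ u ∈ C₁, Tb.lca z u = P := by
      intro u hu
      have huC₂ : u ∉ C₂ := fun h => Set.disjoint_left.mp hdisj hu h
      refine Set.Subset.antisymm (Tb.lca_subset hPTb hzP (hunP ▸ Or.inl hu)) ?_
      have hC₂sub : C₂ ⊆ Tb.lca z u := by
        rcases Tb.comparable (Tb.lca_cluster z u) hC₂ (Tb.lca_left_mem z u) hzC₂ with h | h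
        · exact absurd (h (Tb.lca_right_mem z u)) huC₂
        · exact h
      have hC₁sub : C₁ ⊆ Tb.lca z u := by
        rcases Tb.comparable (Tb.lca_cluster z u) hC₁ (Tb.lca_right_mem z u) hu with h | h
        · exact absurd (h (Tb.lca_left_mem z u)) hzC₁
        · exact h
      rw [← hunP]
      exact Set.union_subset hC₁sub hC₂sub
    have caseT1 : ∀ p' q' : V, p' ∈ K → q' ∈ K → T'.lca p' q' = W →
        (∀ a', ahoAdj R L a' q' → a' ∈ K) →
        ∀ w₀, w₀ ∈ L → σ p' ≠ σ q' → σ q' = σ w₀ → E p' q' → ¬ E p' w₀ → False := by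
      intro p' q' hp'K hq'K hXW' hadjK' w₀ hw₀L hσpq hσqw₀ hEpq hnEpw₀
      have bmpq := (hE p' q').mp hEpq
      have hdag : ∀ v, σ v = σ q' → E p' v → v ∈ K := by
        intro v hv hEv
        have heq : Tb.lca p' v = Tb.lca p' q' := bm_lca_eq ((hE p' v).mp hEv) bmpq hv
        have hm : v ∈ Tb.lca p' q' := heq ▸ Tb.lca_right_mem p' v
        exact Tb.lca_subset hKTb hp'K hq'K hm
      have hddag : ∀ v, σ v = σ q' → ¬ E p' v → v ∉ W := by
        intro v hv hnv
        have htrip : (p', q', v) ∈ R := mem_Rbin_inf hσpq hv.symm hEpq hnv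
        have hm := disp_not_mem hdisp htrip
        rw [hXW'] at hm; exact hm
      have hw₀W : w₀ ∉ W := hddag w₀ hσqw₀.symm hnEpw₀
      have hσz : σ z ≠ σ q' := by
        intro h
        by_cases hEz : E p' z
        · exact hzK (hdag z h hEz)
        · exact hddag z h hEz hzW
      have hQmem : ⋂₀ {A | A ∈ Tb.clusters ∧ z ∈ A ∧ ∃ v ∈ A, σ v = σ q'} ∈
          {A | A ∈ Tb.clusters ∧ z ∈ A ∧ ∃ v ∈ A, σ v = σ q'} := by
        apply chain_sInter_mem
        · exact ⟨P, hPTb, hzP, q', hKP hq'K, rfl⟩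
        · rintro A ⟨hA, hzA, -⟩ A' ⟨hA', hzA', -⟩
          exact Tb.comparable hA hA' hzA hzA'
      set Q := ⋂₀ {A | A ∈ Tb.clusters ∧ z ∈ A ∧ ∃ v ∈ A, σ v = σ q'} with hQdef
      obtain ⟨hQTb, hzQ, vq, hvqQ, hvqc⟩ := hQmem
      have hQmin : ∀ A, A ∈ Tb.clusters → z ∈ A → (∃ v ∈ A, σ v = σ q') → Q ⊆ A :=
        fun A hA ha hb => Set.sInter_subset_of_mem ⟨hA, ha, hb⟩
      have hQP : Q ⊆ P := hQmin P hPTb hzP ⟨q', hKP hq'K, rfl⟩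
      obtain ⟨v₁, hv₁c, bmv₁⟩ := exists_bestMatch (Tb := Tb) (c := σ q') ⟨q', rfl⟩ (Ne.symm hσz)
      have hEzv₁ : E z v₁ := (hE z v₁).mpr bmv₁
      have hlcazv₁ : Tb.lca z v₁ = Q := by
        refine Set.Subset.antisymm
          ((bmv₁.2 vq (hvqc.trans hv₁c.symm)).trans (Tb.lca_subset hQTb hzQ hvqQ))
          (hQmin _ (Tb.lca_cluster z v₁) (Tb.lca_left_mem z v₁)
            ⟨v₁, Tb.lca_right_mem z v₁, hv₁c⟩)
      by_cases hQPeq : Q = P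
      · have hnoc2 : ∀ v ∈ C₂, σ v ≠ σ q' := by
          intro v hv hc
          have h1 : Q ⊆ Tb.lca z v :=
            hQmin _ (Tb.lca_cluster z v) (Tb.lca_left_mem z v) ⟨v, Tb.lca_right_mem z v, hc⟩
          have h2 : Tb.lca z v ⊆ C₂ := Tb.lca_subset hC₂ hzC₂ hv
          rw [hQPeq] at h1
          exact hC₂p.not_subset (h1.trans h2)
        have hglobal : ∀ y₂, σ y₂ = σ q' → P ⊆ Tb.lca z y₂ := by
          intro y₂ hy₂
          rw [← hQPeq]
          exact hQmin _ (Tb.lca_cluster z y₂) (Tb.lca_left_mem z y₂)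
            ⟨y₂, Tb.lca_right_mem z y₂, hy₂⟩
        have hEzq : E z q' := by
          refine (hE z q').mpr ⟨hσz, fun y₂ hy₂ => ?_⟩
          rw [hlcaC₁ q' (hKC₁ hq'K)]
          exact hglobal y₂ hy₂
        by_cases hw₀P : w₀ ∈ P
        · have hw₀C₁ : w₀ ∈ C₁ := by
            have hm : w₀ ∈ C₁ ∪ C₂ := hunP ▸ hw₀P
            rcases hm with h | h
            · exact h
            · exact absurd hσqw₀.symm (hnoc2 w₀ h)
          have hEzw₀ : E z w₀ := by
            refine (hE z w₀).mpr ⟨fun h => hσz (h.trans hσqw₀.symm), fun y₂ hy₂ => ?_⟩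
            rw [hlcaC₁ w₀ hw₀C₁]
            exact hglobal y₂ (hy₂.trans hσqw₀.symm)
          have hqw₀ : q' ≠ w₀ := fun h => hw₀W (h ▸ (hKW hq'K))
          have htrip : (q', w₀, z) ∈ R := mem_Rbin_forb hσz hσqw₀ hqw₀ hEzq hEzw₀
          exact anchored hW (hKW hq'K) hw₀W hzW (disp_not_mem hdisp htrip)
        · have hnEzw₀ : ¬ E z w₀ := by
            intro hEzw
            have hs := ((hE z w₀).mp hEzw).2 q' hσqw₀
            rw [hlcaC₁ q' (hKC₁ hq'K)] at hs
            exact hw₀P (hs (Tb.lca_right_mem z w₀))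
          have htrip : (z, q', w₀) ∈ R := mem_Rbin_inf hσz hσqw₀ hEzq hnEzw₀
          exact hzK (hadjK' z ⟨hzL, hKL hq'K, w₀, hw₀L, Or.inl htrip⟩)
      · have hQss : Q ⊂ P := ssubset_of_subset_of_ne hQP hQPeq
        have hQC₂ : Q ⊆ C₂ := by
          rcases Tb.nested Q hQTb C₁ hC₁ with h | h | h
          · exact absurd (h hzQ) hzC₁
          · exfalso
            rcases Tb.nested Q hQTb C₂ hC₂ with h' | h' | h'
            · exact Set.disjoint_left.mp hdisj (hKC₁ hx₀K) (h' (h (hKC₁ hx₀K)))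
            · exact hQss.not_subset (by rw [← hunP]; exact Set.union_subset h h')
            · exact Set.disjoint_left.mp h' hzQ hzC₂
          · intro a ha
            have haP : a ∈ C₁ ∪ C₂ := hunP ▸ hQP ha
            rcases haP with h' | h'
            · exact absurd h' (fun hh => Set.disjoint_left.mp h ha hh)
            · exact h'
        have hv₁C₂ : v₁ ∈ C₂ := hQC₂ (hlcazv₁ ▸ Tb.lca_right_mem z v₁)
        have hv₁K : v₁ ∉ K := fun h => Set.disjoint_left.mp hdisj (hKC₁ h) hv₁C₂
        have hnEpv₁ : ¬ E p' v₁ := fun h => hv₁K (hdag v₁ hv₁c h)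
        have hv₁W : v₁ ∉ W := hddag v₁ hv₁c hnEpv₁
        have hnEzq : ¬ E z q' := by
          intro h
          have hs := ((hE z q').mp h).2 v₁ hv₁c
          rw [hlcaC₁ q' (hKC₁ hq'K), hlcazv₁] at hs
          exact hQss.not_subset hs
        have htrip : (z, v₁, q') ∈ R :=
          mem_Rbin_inf (fun h => hσz (h.trans hv₁c)) hv₁c hEzv₁ hnEzq
        exact hv₁W (absorb hW hzW (hKW hq'K) (disp_not_mem hdisp htrip))
    have caseT2 : ∀ p' q' : V, p' ∈ K → q' ∈ K → T'.lca p' q' = W →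
        (∀ a', ahoAdj R L a' p' → a' ∈ K) →
        ∀ w₀, w₀ ∈ L → σ w₀ ≠ σ p' → σ p' = σ q' → p' ≠ q' → E w₀ p' → E w₀ q' → False := by
      intro p' q' hp'K hq'K hXW' hadjK' w₀ hw₀L f1 f2 f3 f4 f5
      have hw₀W : w₀ ∉ W := by
        have htrip : (p', q', w₀) ∈ R := mem_Rbin_forb f1 f2 f3 f4 f5
        have hm := disp_not_mem hdisp htrip
        rw [hXW'] at hm; exact hm
      by_cases hzc : σ z = σ p'
      · have hpz : p' ≠ z := fun h => hzK (h ▸ hp'K)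
        have hnEw₀z : ¬ E w₀ z := by
          intro hEz
          have htrip : (p', z, w₀) ∈ R := mem_Rbin_forb f1 hzc.symm hpz f4 hEz
          exact hzK (hadjK' z (ahoAdj_symm ⟨hKL hp'K, hzL, w₀, hw₀L, Or.inl htrip⟩))
        have htrip2 : (w₀, p', z) ∈ R := mem_Rbin_inf f1 hzc.symm f4 hnEw₀z
        have hnm : z ∉ T'.lca p' w₀ := by
          rw [T'.lca_comm]; exact disp_not_mem hdisp htrip2
        exact anchored hW (hKW hp'K) hw₀W hzW hnm
      · by_cases hall : ∀ y', σ y' = σ p' → P ⊆ Tb.lca z y'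
        · have hEzp : E z p' := by
            refine (hE z p').mpr ⟨hzc, fun y₂ hy₂ => ?_⟩
            rw [hlcaC₁ p' (hKC₁ hp'K)]
            exact hall y₂ hy₂
          have hEzq : E z q' := by
            refine (hE z q').mpr ⟨fun h => hzc (h.trans f2.symm), fun y₂ hy₂ => ?_⟩
            rw [hlcaC₁ q' (hKC₁ hq'K)]
            exact hall y₂ (hy₂.trans f2.symm)
          have htrip : (p', q', z) ∈ R := mem_Rbin_forb hzc f2 f3 hEzp hEzq
          have hm := disp_not_mem hdisp htrip
          rw [hXW'] at hm
          exact hm hzW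
        · push_neg at hall
          obtain ⟨ys, hysc, hysP⟩ := hall
          have hyss : Tb.lca z ys ⊂ P := by
            rcases Tb.comparable (Tb.lca_cluster z ys) hPTb (Tb.lca_left_mem z ys) hzP with h | h
            · exact ssubset_iff_subset_not_subset.mpr ⟨h, hysP⟩
            · exact absurd h hysP
          obtain ⟨v₁, hv₁c, bmv₁⟩ := exists_bestMatch (Tb := Tb) (c := σ p') ⟨p', rfl⟩
            (Ne.symm hzc)
          have hEzv₁ : E z v₁ := (hE z v₁).mpr bmv₁
          have hlv₁ : Tb.lca z v₁ ⊂ P :=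
            lt_of_le_of_lt (bmv₁.2 ys (hysc.trans hv₁c.symm)) hyss
          have hv₁C₂ : v₁ ∈ C₂ := by
            rcases Tb.nested (Tb.lca z v₁) (Tb.lca_cluster z v₁) C₁ hC₁ with h | h | h
            · exact absurd (h (Tb.lca_left_mem z v₁)) hzC₁
            · exfalso
              rcases Tb.nested (Tb.lca z v₁) (Tb.lca_cluster z v₁) C₂ hC₂ with h' | h' | h'
              · exact Set.disjoint_left.mp hdisj (hKC₁ hx₀K) (h' (h (hKC₁ hx₀K)))
              · exact hlv₁.not_subset (by rw [← hunP]; exact Set.union_subset h h')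
              · exact Set.disjoint_left.mp h' (Tb.lca_left_mem z v₁) hzC₂
            · have hm : v₁ ∈ C₁ ∪ C₂ := hunP ▸ hlv₁.subset (Tb.lca_right_mem z v₁)
              rcases hm with h' | h'
              · exact absurd h' (fun hh => Set.disjoint_left.mp h (Tb.lca_right_mem z v₁) hh)
              · exact h'
          have hv₁K : v₁ ∉ K := fun h => Set.disjoint_left.mp hdisj (hKC₁ h) hv₁C₂
          have hv₁p : p' ≠ v₁ := fun h => hv₁K (h ▸ hp'K)
          have hnEzp : ¬ E z p' := by
            intro h
            have hs := ((hE z p').mp h).2 v₁ hv₁c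
            rw [hlcaC₁ p' (hKC₁ hp'K)] at hs
            exact hlv₁.not_subset hs
          have htrip1 : (z, v₁, p') ∈ R :=
            mem_Rbin_inf (fun h => hzc (h.trans hv₁c)) hv₁c hEzv₁ hnEzp
          have hv₁W : v₁ ∈ W := absorb hW hzW (hKW hp'K) (disp_not_mem hdisp htrip1)
          have hv₁L : v₁ ∈ L := hPL (hlv₁.subset (Tb.lca_right_mem z v₁))
          have hnEw₀v₁ : ¬ E w₀ v₁ := by
            intro hEv
            have htrip : (p', v₁, w₀) ∈ R := mem_Rbin_forb f1 hv₁c.symm hv₁p f4 hEv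
            exact hv₁K (hadjK' v₁ (ahoAdj_symm ⟨hKL hp'K, hv₁L, w₀, hw₀L, Or.inl htrip⟩))
          have htrip2 : (w₀, p', v₁) ∈ R := mem_Rbin_inf f1 hv₁c.symm f4 hnEw₀v₁
          have hnm : v₁ ∉ T'.lca p' w₀ := by
            rw [T'.lca_comm]; exact disp_not_mem hdisp htrip2
          exact anchored hW (hKW hp'K) hw₀W hv₁W hnm
    obtain ⟨hpL, hqL, w₀, hw₀L, hor⟩ := hpq
    rcases hor with h | h
    · rcases h with hinf | hforb
      · exact caseT1 p q hpK hqK hXW hadjK w₀ hw₀L hinf.1 hinf.2.1 hinf.2.2.1 hinf.2.2.2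
      · exact caseT2 p q hpK hqK hXW hadjKp w₀ hw₀L hforb.1 hforb.2.1 hforb.2.2.1
          hforb.2.2.2.1 hforb.2.2.2.2
    · rcases h with hinf | hforb
      · exact caseT1 q p hqK hpK ((T'.lca_comm q p).trans hXW) hadjKp w₀ hw₀L
          hinf.1 hinf.2.1 hinf.2.2.1 hinf.2.2.2
      · exact caseT2 q p hqK hpK ((T'.lca_comm q p).trans hXW) hadjK w₀ hw₀L
          hforb.1 hforb.2.1 hforb.2.2.1 hforb.2.2.2.1 hforb.2.2.2.2
  have horient : ∀ B' D', B' ∈ Tb.clusters → D' ∈ Tb.clusters → Disjoint B' D' →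
      B' ∪ D' = P → x₀ ∈ B' → K ⊆ B' ∨ K ⊆ D' := by
    intro B' D' hB' hD' hdisj' hun' hx₀B'
    rcases Tb.comparable hKTb hB' hx₀K hx₀B' with h | h
    · exact Or.inl h
    · by_cases hKB : K ⊆ B'
      · exact Or.inl hKB
      · obtain ⟨k, hkK, hkB⟩ := Set.not_subset.mp hKB
        have hkD : k ∈ D' := by
          have hm : k ∈ B' ∪ D' := hun' ▸ hKP hkK
          rcases hm with h' | h'
          · exact absurd h' hkB
          · exact h'
        rcases Tb.comparable hKTb hD' hkK hkD with h' | h'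
        · exact Or.inr h'
        · exfalso
          apply hzK
          have hsub : P ⊆ K := by rw [← hun']; exact Set.union_subset h h'
          exact hsub hzP
  have hx₀BD : x₀ ∈ B ∪ D := hunBD ▸ hKP hx₀K
  have hunDB : D ∪ B = P := (Set.union_comm D B).trans hunBD
  rcases hx₀BD with hx₀B | hx₀D
  · rcases horient B D hB hD hdisjBD hunBD hx₀B with hKB | hKD
    · exact final B D hB hD hdisjBD hunBD hBp hDp hKB
    · exact final D B hD hB hdisjBD.symm hunDB hDp hBp hKD
  · rcases horient D B hD hB hdisjBD.symm hunDB hx₀D with hKD | hKB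
    · exact final D B hD hB hdisjBD.symm hunDB hDp hBp hKD
    · exact final B D hB hD hdisjBD hunBD hBp hDp hKB

lemma claimA (hbin : Tb.IsBinary) (hE : Explains Tb σ E) :
    ∀ A : Set V, IsAhoCluster (Rbin E σ) A →
      A ∈ Tb.clusters ∧ ∀ T' : PhyloTree V, T'.DisplaysSet (Rbin E σ) → A ∈ T'.clusters := by
  intro A hA
  induction hA with
  | univ => exact ⟨Tb.univ_mem, fun T' _ => T'.univ_mem⟩
  | @component L x₀ hL hx₀ ih =>
    obtain ⟨ihTb, ihT'⟩ := ih
    have hKTb := ml0_step hbin hE ihTb hx₀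
    exact ⟨hKTb, fun T' hdisp => propA_step hbin hE hdisp ihTb (ihT' T' hdisp) hx₀ hKTb⟩

end Main

/-- Lemma: BRT-closure.
The binary-refinable tree `(T,σ)` of a binary-explainable BMG `(G,σ)` (i.e. the Aho
tree of `R^bin(G,σ)`) satisfies `r(T) = cl(R^bin(G,σ))`: the set of triples displayed
by the BRT is exactly the closure of the extended triple set. -/
theorem stmt9 {V Γ : Type*} [Fintype V] (E : V → V → Prop) (σ : V → Γ)
    (hbe : BinaryExplainable E σ)
    (T : PhyloTree V) (hT : IsAhoTree (Rbin E σ) T) :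
    T.triples = tripleClosure (Rbin E σ) := by
  classical
  obtain ⟨Tb, hbin, hE⟩ := hbe
  have hTdisp : T.DisplaysSet (Rbin E σ) := aho_displays hT Rbin_fst_ne
  ext t
  obtain ⟨x, y, z⟩ := t
  simp only [PhyloTree.triples, tripleClosure, Set.mem_setOf_eq]
  constructor
  · intro h T' hT'disp
    obtain ⟨hxy, hz⟩ := T.displays_iff.mp h
    have hN : IsAhoCluster (Rbin E σ) (T.lca x y) :=
      aho_of_mem_clusters hT (T.lca_cluster x y)
    have hNT' : T.lca x y ∈ T'.clusters := (claimA hbin hE _ hN).2 T' hT'disp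
    refine T'.displays_of_not_mem hxy (fun hmem => hz ?_)
    exact T'.lca_subset hNT' (T.lca_left_mem x y) (T.lca_right_mem x y) hmem
  · intro h
    exact h T hTdisp
end

section
/- Let F ⊆ V×V be a loop-free arc set with |F| ≤ k such that (G△F, σ) is a BMG. Then every vertex s ∈ S has in-arcs in G△F from at most one of the sets X_1, …, X_m. -/
/-! ### The reduction from Exact 3-Cover (X3C)

Given an X3C instance, a set `𝔖` with `|𝔖| = 3t` and a collection `𝒞 = {C_1,…,C_m}`
of 3-element subsets of `𝔖`, set `r = 18t²`, `k = 6r(m−t) + r − 18t` and `q = 3k`.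
The constructed 2-colored digraph `(G,σ)` (colors: black = `true`, white = `false`)
has vertex set `S ⊍ (X_1 ⊍ ⋯ ⊍ X_m) ⊍ (Y_1 ⊍ ⋯ ⊍ Y_m)`, where `S` contains a black and
a white copy of each `s ∈ 𝔖`, each `X_i` has `r` black and `r` white vertices and each
`Y_i` has `q` black and `q` white vertices. -/

/-- The vertex set of the reduction graph. -/
abbrev Vred (SS : Type*) (m r q : ℕ) : Type _ :=
  (SS × Bool) ⊕ ((Fin m × Fin r × Bool) ⊕ (Fin m × Fin q × Bool))

/-- The coloring of the reduction graph (black = `true`, white = `false`). -/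
def sigmaRed {SS : Type*} {m r q : ℕ} : Vred SS m r q → Bool
  | Sum.inl (_, c) => c
  | Sum.inr (Sum.inl (_, _, c)) => c
  | Sum.inr (Sum.inr (_, _, c)) => c

/-- The set `S` of vertices of the reduction graph. -/
def Sset {SS : Type*} {m r q : ℕ} : Set (Vred SS m r q) :=
  Set.range Sum.inl

/-- The set `X_i` of vertices of the reduction graph. -/
def Xset {SS : Type*} {m r q : ℕ} (i : Fin m) : Set (Vred SS m r q) :=
  {v | ∃ p c, v = Sum.inr (Sum.inl (i, p, c))}

/-- The set `Y_i` of vertices of the reduction graph. -/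
def Yset {SS : Type*} {m r q : ℕ} (i : Fin m) : Set (Vred SS m r q) :=
  {v | ∃ p c, v = Sum.inr (Sum.inr (i, p, c))}

/-- The arc set of the reduction graph: both arcs between every black and every white
vertex of `S`; all arcs from black to white vertices within each `X_i`; both arcs
between every black and every white vertex within each `Y_i`; all arcs `(x,y)` with
`x ∈ X_i`, `y ∈ Y_i` of distinct colors; and for each `i` and each `s ∈ C_i` the arcs
`(x, s_b)` for white `x ∈ X_i` and `(x, s_w)` for black `x ∈ X_i`. -/
def Ered {SS : Type*} {m r q : ℕ} (𝒞 : Fin m → Finset SS) :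
    Set (Vred SS m r q × Vred SS m r q) :=
  {p | match p with
    | (Sum.inl (_, c), Sum.inl (_, c')) => c ≠ c'
    | (Sum.inr (Sum.inl (i, _, c)), Sum.inr (Sum.inl (i', _, c'))) =>
        i = i' ∧ c = true ∧ c' = false
    | (Sum.inr (Sum.inr (i, _, c)), Sum.inr (Sum.inr (i', _, c'))) => i = i' ∧ c ≠ c'
    | (Sum.inr (Sum.inl (i, _, c)), Sum.inr (Sum.inr (j, _, c'))) => i = j ∧ c ≠ c'
    | (Sum.inr (Sum.inl (i, _, c)), Sum.inl (s, c')) => s ∈ 𝒞 i ∧ c ≠ c'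
    | _ => False}

/-- `r = 18t²`. -/
def rr (t : ℕ) : ℕ := 18 * t ^ 2

/-- `k = 6r(m−t) + r − 18t`. -/
def kk (t m : ℕ) : ℕ := 6 * rr t * (m - t) + rr t - 18 * t

/-- `q = 3·(6r(m−t) + r − 18t)`. -/
def qq (t m : ℕ) : ℕ := 3 * kk t m

/-- The X3C instance `(𝔖, 𝒞)` has an exact 3-cover: a subcollection `𝒞' ⊆ 𝒞` with
`|𝒞'| = t` whose union is `𝔖`. -/
def HasExact3Cover {SS : Type*} {m : ℕ} (t : ℕ) (𝒞 : Fin m → Finset SS) : Prop :=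
  ∃ I : Finset (Fin m), I.card = t ∧ ∀ s : SS, ∃ i ∈ I, s ∈ 𝒞 i

section AuxLemmas

lemma lca_spec {V : Type*} [Finite V] (T : PhyloTree V) (x y : V) :
    T.lca x y ∈ T.clusters ∧ x ∈ T.lca x y ∧ y ∈ T.lca x y := by
  classical
  set Sfam : Set (Set V) := {A | A ∈ T.clusters ∧ x ∈ A ∧ y ∈ A} with hSfam
  have hfin : Sfam.Finite := Set.toFinite _
  have hne : Sfam.Nonempty := ⟨Set.univ, T.univ_mem, trivial, trivial⟩
  obtain ⟨A, hA, hmin⟩ := Set.Finite.exists_minimalFor id Sfam hfin hne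
  have hleast : ∀ B ∈ Sfam, A ⊆ B := by
    intro B hB
    rcases T.nested A hA.1 B hB.1 with h | h | h
    · exact h
    · exact hmin hB h
    · exact absurd hB.2.1 (Set.disjoint_left.mp h hA.2.1)
  have hlca : T.lca x y = A := by
    apply subset_antisymm
    · exact Set.sInter_subset_of_mem hA
    · exact Set.subset_sInter hleast
  rw [hlca]
  exact hA

lemma find_good {V : Type*} [Fintype V] {F : Set (V × V)} {K Q : ℕ}
    (hF : F.ncard ≤ K) (hQ : 2 * K < Q) (x x' : V) (mk : Fin Q → V)
    (hmk : Function.Injective mk) :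
    ∃ p : Fin Q, (x, mk p) ∉ F ∧ (x', mk p) ∉ F := by
  classical
  have hfin : F.Finite := Set.toFinite F
  have key : ∀ z : V, (Finset.univ.filter (fun p : Fin Q => (z, mk p) ∈ F)).card ≤ K := by
    intro z
    have hinj : Function.Injective (fun p : Fin Q => (z, mk p)) := by
      intro a b hab
      exact hmk (congrArg Prod.snd hab)
    have h1 : (Finset.univ.filter (fun p : Fin Q => (z, mk p) ∈ F)).card
        = ((Finset.univ.filter (fun p : Fin Q => (z, mk p) ∈ F)).image
            (fun p : Fin Q => (z, mk p))).card :=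
      (Finset.card_image_of_injective _ hinj).symm
    have h2 : ((Finset.univ.filter (fun p : Fin Q => (z, mk p) ∈ F)).image
        (fun p : Fin Q => (z, mk p))) ⊆ hfin.toFinset := by
      intro q hq
      simp only [Finset.mem_image, Finset.mem_filter] at hq
      obtain ⟨p, ⟨_, hp⟩, rfl⟩ := hq
      exact hfin.mem_toFinset.mpr hp
    have h3 : hfin.toFinset.card = F.ncard := (Set.ncard_eq_toFinset_card F hfin).symm
    rw [h1]
    exact le_trans (Finset.card_le_card h2) (h3 ▸ hF)
  by_contra h
  push_neg at h
  have hsub : (Finset.univ : Finset (Fin Q)) ⊆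
      (Finset.univ.filter (fun p : Fin Q => (x, mk p) ∈ F)) ∪
      (Finset.univ.filter (fun p : Fin Q => (x', mk p) ∈ F)) := by
    intro p _
    simp only [Finset.mem_union, Finset.mem_filter, Finset.mem_univ, true_and]
    by_contra hc
    push_neg at hc
    exact hc.2 (h p hc.1)
  have := Finset.card_le_card hsub
  have hcu : (Finset.univ : Finset (Fin Q)).card = Q := by simp
  have := le_trans this (Finset.card_union_le _ _)
  have hx1 := key x
  have hx2 := key x'
  omega

end AuxLemmas

/-- Claim: at-most-one-Xi.
Let `F ⊆ V×V` be a loop-free arc set with `|F| ≤ k` such that `(G△F, σ)` is a BMG.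
Then every vertex `s ∈ S` has in-arcs in `G△F` from at most one of the sets
`X_1, …, X_m`. -/
theorem stmt16 {SS : Type*} [Fintype SS] [DecidableEq SS] (t m : ℕ)
    (hcard : Fintype.card SS = 3 * t)
    (𝒞 : Fin m → Finset SS) (h𝒞 : ∀ i, (𝒞 i).card = 3)
    (F : Set (Vred SS m (rr t) (qq t m) × Vred SS m (rr t) (qq t m)))
    (hloop : ∀ v, (v, v) ∉ F) (hF : F.ncard ≤ kk t m)
    (hbmg : IsBMG (fun u v => (u, v) ∈ symmDiff (Ered 𝒞) F) sigmaRed) :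
    ∀ (s : Vred SS m (rr t) (qq t m)), s ∈ Sset →
      ∀ (i j : Fin m) (x x' : Vred SS m (rr t) (qq t m)),
        x ∈ Xset i → x' ∈ Xset j →
        (x, s) ∈ symmDiff (Ered 𝒞) F → (x', s) ∈ symmDiff (Ered 𝒞) F → i = j := by
    classical
  intro s hs i j x x' hx hx' hxs hx's
  by_contra hij
  obtain ⟨sv, hsv⟩ := hs
  obtain ⟨px, cx, hxe⟩ := hx
  obtain ⟨px', cx', hx'e⟩ := hx'
  obtain ⟨T, hT⟩ := hbmg
  have hbx : bestMatch T sigmaRed x s := (hT x s).1 hxs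
  have hbx' : bestMatch T sigmaRed x' s := (hT x' s).1 hx's
  have hcx : sigmaRed x ≠ sigmaRed s := hbx.1
  have hcx' : sigmaRed x' ≠ sigmaRed s := hbx'.1
  -- arithmetic: k ≥ 1 hence q > 2k
  have hSSne : Nonempty SS := ⟨sv.1⟩
  have ht1 : 1 ≤ t := by
    have hpos : 0 < Fintype.card SS := Fintype.card_pos_iff.mpr hSSne
    omega
  have hm2 : 2 ≤ m := by
    have h1 := i.2; have h2 := j.2
    have hne : (i : ℕ) ≠ (j : ℕ) := fun h => hij (Fin.ext h)
    omega
  have ht2 : t ≤ t ^ 2 := Nat.le_self_pow two_ne_zero t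
  have hk1 : 1 ≤ kk t m := by
    unfold kk rr
    rcases Nat.lt_or_ge t m with h | h
    · have h1 : 1 ≤ m - t := by omega
      apply Nat.le_sub_of_add_le
      have hmul : 108 * t ^ 2 * 1 ≤ 108 * t ^ 2 * (m - t) :=
        Nat.mul_le_mul_left (108 * t ^ 2) h1
      nlinarith
    · have hmt : m - t = 0 := by omega
      rw [hmt]
      apply Nat.le_sub_of_add_le
      have ht2' : 2 ≤ t := by omega
      nlinarith
  have hq : 2 * kk t m < qq t m := by unfold qq; omega
  -- pick y ∈ Y_i of color σ(s), untouched by F for both x and x'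
  have hmkinj : ∀ i0 : Fin m, Function.Injective
      (fun p : Fin (qq t m) =>
        (Sum.inr (Sum.inr (i0, p, sigmaRed s)) : Vred SS m (rr t) (qq t m))) := by
    intro i0 a b hab
    simpa using hab
  obtain ⟨p, hp1, hp2⟩ := find_good hF hq x x' _ (hmkinj i)
  obtain ⟨p', hp1', hp2'⟩ := find_good hF hq x' x _ (hmkinj j)
  set y : Vred SS m (rr t) (qq t m) := Sum.inr (Sum.inr (i, p, sigmaRed s)) with hy
  set y' : Vred SS m (rr t) (qq t m) := Sum.inr (Sum.inr (j, p', sigmaRed s)) with hy'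
  have hsy : sigmaRed y = sigmaRed s := rfl
  have hsy' : sigmaRed y' = sigmaRed s := rfl
  have hcxv : cx ≠ sigmaRed s := by rw [hxe] at hcx; exact hcx
  have hcx'v : cx' ≠ sigmaRed s := by rw [hx'e] at hcx'; exact hcx'
  have hxyE : (x, y) ∈ Ered 𝒞 := by
    rw [hxe]; exact ⟨rfl, hcxv⟩
  have hx'y'E : (x', y') ∈ Ered 𝒞 := by
    rw [hx'e]; exact ⟨rfl, hcx'v⟩
  have hx'yNE : (x', y) ∉ Ered 𝒞 := by
    rw [hx'e]; intro hmem; exact hij hmem.1.symm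
  have hxy'NE : (x, y') ∉ Ered 𝒞 := by
    rw [hxe]; intro hmem; exact hij hmem.1
  have hxyG : (x, y) ∈ symmDiff (Ered 𝒞) F :=
    Set.mem_symmDiff.mpr (Or.inl ⟨hxyE, hp1⟩)
  have hx'y'G : (x', y') ∈ symmDiff (Ered 𝒞) F :=
    Set.mem_symmDiff.mpr (Or.inl ⟨hx'y'E, hp1'⟩)
  have hx'yG : (x', y) ∉ symmDiff (Ered 𝒞) F := by
    intro h
    rcases Set.mem_symmDiff.mp h with ⟨h1, _⟩ | ⟨h1, _⟩
    · exact hx'yNE h1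
    · exact hp2 h1
  have hxy'G : (x, y') ∉ symmDiff (Ered 𝒞) F := by
    intro h
    rcases Set.mem_symmDiff.mp h with ⟨h1, _⟩ | ⟨h1, _⟩
    · exact hxy'NE h1
    · exact hp2' h1
  -- tree argument
  have bm_xy : bestMatch T sigmaRed x y := (hT x y).1 hxyG
  have bm_x'y' : bestMatch T sigmaRed x' y' := (hT x' y').1 hx'y'G
  have hyin : y ∈ T.lca x s := bm_xy.2 s hsy.symm (lca_spec T x y).2.2
  have hy'in : y' ∈ T.lca x' s := bm_x'y'.2 s hsy'.symm (lca_spec T x' y').2.2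
  have hns1 : ¬ (T.lca x' y ⊆ T.lca x' s) := by
    intro hsub
    apply hx'yG
    refine (hT x' y).2 ⟨?_, fun z hz => hsub.trans (hbx'.2 z (hz.trans hsy))⟩
    rw [hsy]; exact hcx'
  have hns2 : ¬ (T.lca x y' ⊆ T.lca x s) := by
    intro hsub
    apply hxy'G
    refine (hT x y').2 ⟨?_, fun z hz => hsub.trans (hbx.2 z (hz.trans hsy'))⟩
    rw [hsy']; exact hcx
  rcases T.nested (T.lca x s) (lca_spec T x s).1 (T.lca x' s) (lca_spec T x' s).1
      with hc | hc | hc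
  · exact hns1 (Set.sInter_subset_of_mem
      ⟨(lca_spec T x' s).1, (lca_spec T x' s).2.1, hc hyin⟩)
  · exact hns2 (Set.sInter_subset_of_mem
      ⟨(lca_spec T x s).1, (lca_spec T x s).2.1, hc hy'in⟩)
  · exact absurd (lca_spec T x' s).2.2 (Set.disjoint_left.mp hc (lca_spec T x s).2.2)
end

section
/- Let F ⊆ V×V be a loop-free arc set with |F| ≤ k such that (G△F, σ) is a BMG. Then G△F contains no arc between a vertex of X_i and a vertex of X_j for any i ≠ j (in either direction). -/
/-- Claim: no-insertion-XiXj.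
Let `F ⊆ V×V` be a loop-free arc set with `|F| ≤ k` such that `(G△F, σ)` is a BMG.
Then `G△F` contains no arc between a vertex of `X_i` and a vertex of `X_j` for any
`i ≠ j` (in either direction). -/
theorem stmt18 {SS : Type*} [Fintype SS] [DecidableEq SS] (t m : ℕ)
    (hcard : Fintype.card SS = 3 * t)
    (𝒞 : Fin m → Finset SS) (h𝒞 : ∀ i, (𝒞 i).card = 3)
    (F : Set (Vred SS m (rr t) (qq t m) × Vred SS m (rr t) (qq t m)))
    (hloop : ∀ v, (v, v) ∉ F) (hF : F.ncard ≤ kk t m)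
    (hbmg : IsBMG (fun u v => (u, v) ∈ symmDiff (Ered 𝒞) F) sigmaRed) :
    ∀ (i j : Fin m), i ≠ j →
      ∀ x ∈ Xset i, ∀ x' ∈ Xset j, (x, x') ∉ symmDiff (Ered 𝒞) F := by
  intro i j hij x hx x' hx' hmem
  obtain ⟨p, c, rfl⟩ := hx
  obtain ⟨p', c', rfl⟩ := hx'
  rcases Nat.eq_zero_or_pos (kk t m) with hk0 | hkpos
  · have hFe : F = ∅ :=
      (Set.ncard_eq_zero (Set.toFinite F)).mp (Nat.le_zero.mp (hk0 ▸ hF))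
    rw [hFe, Set.mem_symmDiff] at hmem
    rcases hmem with ⟨hE, -⟩ | ⟨h, -⟩
    · exact hij hE.1
    · exact absurd h (Set.notMem_empty _)
  · obtain ⟨T, hT⟩ := hbmg
    have hbm := (hT _ _).mp hmem
    have hcc : c ≠ c' := hbm.1
    have lmemR : ∀ a b : Vred SS m (rr t) (qq t m), b ∈ T.lca a b := by
      intro a b
      exact Set.mem_sInter.mpr fun A hA => hA.2.2
    -- find a good z in Y_j (color c) untouched in the relevant way
    have hgood : ∃ pz : Fin (qq t m),
        ¬ (((Sum.inr (Sum.inl (j, p', c')) : Vred SS m (rr t) (qq t m)),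
            (Sum.inr (Sum.inr (j, pz, c)) : Vred SS m (rr t) (qq t m))) ∈ F ∨
          ∃ py, ((Sum.inr (Sum.inr (j, pz, c)) : Vred SS m (rr t) (qq t m)),
            (Sum.inr (Sum.inr (j, py, c')) : Vred SS m (rr t) (qq t m))) ∈ F) := by
      by_contra h
      push_neg at h
      classical
      set Bad : Set (Fin (qq t m)) :=
        {pz | ((Sum.inr (Sum.inl (j, p', c')) : Vred SS m (rr t) (qq t m)),
            (Sum.inr (Sum.inr (j, pz, c)) : Vred SS m (rr t) (qq t m))) ∈ F ∨
          ∃ py, ((Sum.inr (Sum.inr (j, pz, c)) : Vred SS m (rr t) (qq t m)),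
            (Sum.inr (Sum.inr (j, py, c')) : Vred SS m (rr t) (qq t m))) ∈ F} with hBad
      have hBadU : Bad = Set.univ := Set.eq_univ_of_forall fun pz => by
        rcases h pz with h1 | h2
        · exact Or.inl h1
        · exact Or.inr h2
      set φ : Fin (qq t m) → Vred SS m (rr t) (qq t m) × Vred SS m (rr t) (qq t m) :=
        fun pz => if hh : ∃ py, ((Sum.inr (Sum.inr (j, pz, c)) : Vred SS m (rr t) (qq t m)),
            (Sum.inr (Sum.inr (j, py, c')) : Vred SS m (rr t) (qq t m))) ∈ F then
            (Sum.inr (Sum.inr (j, pz, c)), Sum.inr (Sum.inr (j, hh.choose, c')))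
          else (Sum.inr (Sum.inl (j, p', c')), Sum.inr (Sum.inr (j, pz, c))) with hφ
      have hmaps : ∀ pz ∈ Bad, φ pz ∈ F := by
        intro pz hpz
        by_cases hh : ∃ py, ((Sum.inr (Sum.inr (j, pz, c)) : Vred SS m (rr t) (qq t m)),
            (Sum.inr (Sum.inr (j, py, c')) : Vred SS m (rr t) (qq t m))) ∈ F
        · simpa [hφ, hh] using hh.choose_spec
        · rcases hpz with h1 | h2
          · simpa [hφ, hh] using h1
          · exact absurd h2 hh
      have hinj : Set.InjOn φ Bad := by
        intro a _ b _ hab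
        by_cases ha : ∃ py, ((Sum.inr (Sum.inr (j, a, c)) : Vred SS m (rr t) (qq t m)),
            (Sum.inr (Sum.inr (j, py, c')) : Vred SS m (rr t) (qq t m))) ∈ F <;>
          by_cases hb : ∃ py, ((Sum.inr (Sum.inr (j, b, c)) : Vred SS m (rr t) (qq t m)),
            (Sum.inr (Sum.inr (j, py, c')) : Vred SS m (rr t) (qq t m))) ∈ F <;>
          simp [hφ, ha, hb, Prod.ext_iff] at hab <;>
          first
            | exact hab
            | exact hab.1
            | exact hab.1.1
            | exact hab.2
            | exact hab.2.1
      have hcard : Bad.ncard ≤ F.ncard :=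
        Set.ncard_le_ncard_of_injOn φ hmaps hinj (Set.toFinite F)
      rw [hBadU, Set.ncard_univ, Nat.card_eq_fintype_card, Fintype.card_fin] at hcard
      have hq3 : qq t m = 3 * kk t m := rfl
      omega
    obtain ⟨pz, hpz⟩ := hgood
    push_neg at hpz
    obtain ⟨hg1, hg2⟩ := hpz
    -- z is in H-relation from x'
    have hx'z : (((Sum.inr (Sum.inl (j, p', c'))) : Vred SS m (rr t) (qq t m)),
        (Sum.inr (Sum.inr (j, pz, c)) : Vred SS m (rr t) (qq t m))) ∈ symmDiff (Ered 𝒞) F := by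
      rw [Set.mem_symmDiff]
      refine Or.inl ⟨?_, hg1⟩
      exact ⟨rfl, hcc.symm⟩
    have bm2 := (hT _ _).mp hx'z
    have hzmem : ∀ A ∈ T.clusters,
        (Sum.inr (Sum.inl (i, p, c)) : Vred SS m (rr t) (qq t m)) ∈ A →
        (Sum.inr (Sum.inl (j, p', c')) : Vred SS m (rr t) (qq t m)) ∈ A →
        (Sum.inr (Sum.inr (j, pz, c)) : Vred SS m (rr t) (qq t m)) ∈ A := by
      intro A hA hxA hx'A
      have hs := bm2.2 (Sum.inr (Sum.inl (i, p, c))) rfl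
      have hsub2 : T.lca (Sum.inr (Sum.inl (j, p', c'))) (Sum.inr (Sum.inl (i, p, c))) ⊆ A :=
        Set.sInter_subset_of_mem ⟨hA, hx'A, hxA⟩
      exact hsub2 (hs (lmemR _ _))
    -- every white vertex of Y_j is a best match of x, forcing q arcs into F
    have hyF : ∀ py : Fin (qq t m),
        ((Sum.inr (Sum.inl (i, p, c)) : Vred SS m (rr t) (qq t m)),
          (Sum.inr (Sum.inr (j, py, c')) : Vred SS m (rr t) (qq t m))) ∈ F := by
      intro py
      have hzy : ((Sum.inr (Sum.inr (j, pz, c)) : Vred SS m (rr t) (qq t m)),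
          (Sum.inr (Sum.inr (j, py, c')) : Vred SS m (rr t) (qq t m))) ∈ symmDiff (Ered 𝒞) F := by
        rw [Set.mem_symmDiff]
        refine Or.inl ⟨?_, hg2 py⟩
        exact ⟨rfl, hcc⟩
      have bm3 := (hT _ _).mp hzy
      have hymem : ∀ A ∈ T.clusters,
          (Sum.inr (Sum.inl (i, p, c)) : Vred SS m (rr t) (qq t m)) ∈ A →
          (Sum.inr (Sum.inl (j, p', c')) : Vred SS m (rr t) (qq t m)) ∈ A →
          (Sum.inr (Sum.inr (j, py, c')) : Vred SS m (rr t) (qq t m)) ∈ A := by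
        intro A hA hxA hx'A
        have hs := bm3.2 (Sum.inr (Sum.inl (j, p', c'))) rfl
        have hsub2 : T.lca (Sum.inr (Sum.inr (j, pz, c))) (Sum.inr (Sum.inl (j, p', c'))) ⊆ A :=
          Set.sInter_subset_of_mem ⟨hA, hzmem A hA hxA hx'A, hx'A⟩
        exact hsub2 (hs (lmemR _ _))
      have hsub : T.lca (Sum.inr (Sum.inl (i, p, c))) (Sum.inr (Sum.inr (j, py, c'))) ⊆
          T.lca (Sum.inr (Sum.inl (i, p, c))) (Sum.inr (Sum.inl (j, p', c'))) := by
        apply Set.sInter_subset_sInter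
        intro A hA
        exact ⟨hA.1, hA.2.1, hymem A hA.1 hA.2.1 hA.2.2⟩
      have bm4 : bestMatch T sigmaRed (Sum.inr (Sum.inl (i, p, c)))
          (Sum.inr (Sum.inr (j, py, c'))) :=
        ⟨hcc, fun w hw => hsub.trans (hbm.2 w hw)⟩
      have hH : ((Sum.inr (Sum.inl (i, p, c)) : Vred SS m (rr t) (qq t m)),
          (Sum.inr (Sum.inr (j, py, c')) : Vred SS m (rr t) (qq t m))) ∈ symmDiff (Ered 𝒞) F :=
        (hT _ _).mpr bm4
      rw [Set.mem_symmDiff] at hH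
      rcases hH with ⟨hE, -⟩ | ⟨hFm, -⟩
      · exact absurd hE.1 hij
      · exact hFm
    -- count: q arcs in F, contradiction with |F| ≤ k
    have himg : (fun py : Fin (qq t m) =>
        ((Sum.inr (Sum.inl (i, p, c)) : Vred SS m (rr t) (qq t m)),
          (Sum.inr (Sum.inr (j, py, c')) : Vred SS m (rr t) (qq t m)))) '' Set.univ ⊆ F := by
      rintro _ ⟨py, -, rfl⟩
      exact hyF py
    have hinj2 : Function.Injective (fun py : Fin (qq t m) =>
        ((Sum.inr (Sum.inl (i, p, c)) : Vred SS m (rr t) (qq t m)),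
          (Sum.inr (Sum.inr (j, py, c')) : Vred SS m (rr t) (qq t m)))) := by
      intro a b hab
      simpa [Prod.ext_iff] using hab
    have hle := Set.ncard_le_ncard himg (Set.toFinite F)
    rw [Set.ncard_image_of_injective _ hinj2, Set.ncard_univ, Nat.card_eq_fintype_card,
      Fintype.card_fin] at hle
    have hq3 : qq t m = 3 * kk t m := rfl
    omega
end
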